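/- arXiv:1106.4377 — 7 statements merged into one kernel-verified Lean document; each statement's English description precedes it below -/
import Mathlib

section
/- Let f be a normalized analytic function that is univalent on the open unit disk 𝔻. Then Re(1 + (z − ζ)·f''(z)/f'(z)) ≥ 0 for all z, ζ ∈ 𝔻 if and only if Re(1 + z·f''(z)/f'(z)) > |z·f''(z)/f'(z)| for all z ∈ 𝔻. (Thus the two-variable and one-variable analytic characterizations of uniformly convex functions agree.) -/
open Complex Metric Set

noncomputable section

/-- The open unit disk in ℂ. -/
def unitDisk : Set ℂ := Metric.ball (0 : ℂ) 1

/-- `f` is normalized analytic on the unit disk: analytic there, `f 0 = 0`, `f' 0 = 1`. -/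
def IsNormalized (f : ℂ → ℂ) : Prop :=
  DifferentiableOn ℂ f unitDisk ∧ f 0 = 0 ∧ deriv f 0 = 1

/-- Uniformly starlike functions (two-variable characterization). -/
def IsUST (f : ℂ → ℂ) : Prop :=
  IsNormalized f ∧ Set.InjOn f unitDisk ∧
    ∀ z ∈ unitDisk, ∀ ζ ∈ unitDisk, z ≠ ζ →
      0 ≤ ((z - ζ) * deriv f z / (f z - f ζ)).re

/-- Uniformly convex functions (one-variable characterization). -/
def IsUCV (f : ℂ → ℂ) : Prop :=
  IsNormalized f ∧ Set.InjOn f unitDisk ∧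
    ∀ z ∈ unitDisk,
      ‖z * deriv (deriv f) z / deriv f z‖
        < (1 + z * deriv (deriv f) z / deriv f z).re

/-- Parabolic starlike functions. -/
def IsSP (f : ℂ → ℂ) : Prop :=
  IsNormalized f ∧
    ∀ z ∈ unitDisk, z ≠ 0 →
      ‖z * deriv f z / f z - 1‖ < (z * deriv f z / f z).re

/-- The `n`-th Taylor coefficient of `f` at the origin. -/
def taylorCoeff (f : ℂ → ℂ) (n : ℕ) : ℂ :=
  iteratedDeriv n f 0 / (n.factorial : ℂ)

open Filter Topology

/-- A holomorphic function injective on the unit disk has nonvanishing derivative. -/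
lemma deriv_ne_zero_of_injOn {f : ℂ → ℂ} (hdiff : DifferentiableOn ℂ f unitDisk)
    (hinj : Set.InjOn f unitDisk) {z₀ : ℂ} (hz₀ : z₀ ∈ unitDisk) :
    deriv f z₀ ≠ 0 := by
  have hopen : IsOpen unitDisk := isOpen_ball
  have hAn : AnalyticOnNhd ℂ f unitDisk := hdiff.analyticOnNhd hopen
  have hUnhds : ∀ᶠ z in 𝓝 z₀, z ∈ unitDisk := hopen.eventually_mem hz₀
  intro hd
  set F : ℂ → ℂ := fun z => f z - f z₀ with hF
  have hFa : AnalyticAt ℂ F z₀ := (hAn z₀ hz₀).sub analyticAt_const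
  have hnotev : ¬ (∀ᶠ z in 𝓝 z₀, F z = 0) := by
    intro hev
    have h2 : ∀ᶠ z in 𝓝 z₀, F z = 0 ∧ z ∈ unitDisk := hev.and hUnhds
    obtain ⟨ε, hε, hball⟩ := Metric.mem_nhds_iff.mp h2
    have hz₁ : z₀ + (ε/2 : ℝ) ∈ ball z₀ ε := by
      have he : z₀ + ((ε/2 : ℝ) : ℂ) - z₀ = ((ε/2 : ℝ) : ℂ) := by ring
      rw [Metric.mem_ball, Complex.dist_eq, he, Complex.norm_real, Real.norm_eq_abs,
        abs_of_pos (by positivity)]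
      linarith
    obtain ⟨hFz, hmem⟩ := hball hz₁
    have h3 : z₀ + ((ε/2 : ℝ) : ℂ) = z₀ := hinj hmem hz₀ (by
      have : F (z₀ + ((ε/2 : ℝ) : ℂ)) = f (z₀ + ((ε/2 : ℝ) : ℂ)) - f z₀ := rfl
      rw [this] at hFz
      linear_combination hFz)
    have h4 : ((ε/2 : ℝ) : ℂ) = 0 := by linear_combination h3
    have : (ε/2 : ℝ) = 0 := by exact_mod_cast h4
    linarith
  have hotop : analyticOrderAt F z₀ ≠ ⊤ := fun h => hnotev (analyticOrderAt_eq_top.mp h)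
  obtain ⟨n, hn⟩ : ∃ n : ℕ, analyticOrderAt F z₀ = n := by
    cases h : analyticOrderAt F z₀ with
    | top => exact absurd h hotop
    | coe n => exact ⟨n, rfl⟩
  obtain ⟨g, hga, hgz0, hev⟩ := (hFa.analyticOrderAt_eq_natCast (n := n)).mp hn
  have hev' : ∀ᶠ z in 𝓝 z₀, F z = (z - z₀) ^ n * g z := by
    simpa [smul_eq_mul] using hev
  have hn0 : n ≠ 0 := by
    rintro rfl
    have h1 := hev'.self_of_nhds
    simp [hF] at h1
    exact hgz0 h1.symm
  have hn1 : n ≠ 1 := by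
    rintro rfl
    have hdF : deriv F z₀ = 0 := by
      have h1 : deriv F z₀ = deriv f z₀ := by
        simp [hF, deriv_sub_const]
      rw [h1, hd]
    have heq : deriv F z₀ = deriv (fun z => (z - z₀) ^ 1 * g z) z₀ :=
      Filter.EventuallyEq.deriv_eq hev'
    have hder : HasDerivAt (fun z => (z - z₀) ^ 1 * g z)
        (1 * g z₀ + (z₀ - z₀) * deriv g z₀) z₀ := by
      simpa using ((hasDerivAt_id z₀).sub_const z₀).fun_mul hga.differentiableAt.hasDerivAt
    have h2 : deriv (fun z => (z - z₀) ^ 1 * g z) z₀ = g z₀ := by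
      rw [hder.deriv]; ring
    rw [heq, h2] at hdF
    exact hgz0 hdF
  have hn2 : 2 ≤ n := by omega
  have hn' : (n : ℂ) ≠ 0 := Nat.cast_ne_zero.mpr hn0
  -- n-th root of g near z₀
  set c : ℂ := (g z₀) ^ ((n:ℂ)⁻¹) with hcdef
  have hcn : c ^ n = g z₀ := Complex.cpow_nat_inv_pow _ hn0
  have hcne : c ≠ 0 := by
    intro h
    rw [h, zero_pow hn0] at hcn
    exact hgz0 hcn.symm
  set h : ℂ → ℂ := fun z => Complex.exp ((n:ℂ)⁻¹ * Complex.log (g z / g z₀)) * c with hhdef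
  have hha : AnalyticAt ℂ h z₀ := by
    apply AnalyticAt.mul _ analyticAt_const
    apply analyticAt_cexp.comp
    apply analyticAt_const.mul
    apply (analyticAt_clog ?_).comp (hga.div analyticAt_const hgz0)
    simp [div_self hgz0, Complex.one_mem_slitPlane]
  have hhz₀ : h z₀ = c := by
    simp [hhdef, div_self hgz0]
  have hevg : ∀ᶠ z in 𝓝 z₀, g z ≠ 0 := hga.continuousAt.eventually_ne hgz0
  have hevh : ∀ᶠ z in 𝓝 z₀, h z ^ n = g z := by
    filter_upwards [hevg] with z hz
    have hq : g z / g z₀ ≠ 0 := div_ne_zero hz hgz0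
    have h1 : (Complex.exp ((n:ℂ)⁻¹ * Complex.log (g z / g z₀))) ^ n
        = g z / g z₀ := by
      rw [← Complex.exp_nat_mul]
      rw [show (n:ℂ) * ((n:ℂ)⁻¹ * Complex.log (g z / g z₀)) = Complex.log (g z / g z₀) by
        field_simp]
      exact Complex.exp_log hq
    simp only [hhdef, mul_pow, h1, hcn]
    field_simp
  set φ : ℂ → ℂ := fun z => (z - z₀) * h z with hφdef
  have hevφ : ∀ᶠ z in 𝓝 z₀, F z = φ z ^ n := by
    filter_upwards [hev', hevh] with z h1 h2
    rw [h1, hφdef]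
    simp only [mul_pow, h2]
  have hφd : HasDerivAt φ (h z₀) z₀ := by
    have h1 := ((hasDerivAt_id z₀).sub_const z₀).fun_mul hha.differentiableAt.hasDerivAt
    simpa using h1
  have hφa : AnalyticAt ℂ φ z₀ := ((analyticAt_id.sub analyticAt_const).mul hha)
  have hφs : HasStrictDerivAt φ (h z₀) z₀ := by
    obtain ⟨p, hp⟩ := hφa
    have h1 := hp.hasStrictDerivAt
    have h2 := hp.hasDerivAt.deriv
    have h3 : h z₀ = ((p 1) fun _ => 1) := by rw [← h2, hφd.deriv]
    rw [h3]
    exact h1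
  have hφne : h z₀ ≠ 0 := hhz₀ ▸ hcne
  have hφ0 : φ z₀ = 0 := by simp [hφdef]
  have hmap : Filter.map φ (𝓝 z₀) = 𝓝 0 := by
    have h1 := hφs.map_nhds_eq hφne
    rwa [hφ0] at h1
  have hE : {z | F z = φ z ^ n ∧ z ∈ unitDisk} ∈ 𝓝 z₀ := hevφ.and hUnhds
  have himg : φ '' {z | F z = φ z ^ n ∧ z ∈ unitDisk} ∈ 𝓝 (0:ℂ) := by
    rw [← hmap]
    exact Filter.image_mem_map hE
  obtain ⟨δ, hδ, hball⟩ := Metric.mem_nhds_iff.mp himg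
  set ζ : ℂ := Complex.exp (((2 * Real.pi / n : ℝ) : ℂ) * Complex.I) with hζdef
  have hζn : ζ ^ n = 1 := by
    rw [hζdef, ← Complex.exp_nat_mul]
    rw [show (n:ℂ) * (((2 * Real.pi / n : ℝ) : ℂ) * Complex.I)
        = 2 * (Real.pi : ℂ) * Complex.I by push_cast; field_simp]
    exact Complex.exp_two_pi_mul_I
  have hζ1 : ζ ≠ 1 := by
    rw [hζdef]
    intro hone
    obtain ⟨k, hk⟩ := Complex.exp_eq_one_iff.mp hone
    have hIpi : (2 * (Real.pi : ℂ) * Complex.I) ≠ 0 := by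
      simp [Complex.I_ne_zero, Real.pi_ne_zero]
    push_cast at hk
    field_simp at hk
    have h5 : (1 : ℂ) = (k : ℂ) * n := by
      apply mul_left_cancel₀ hIpi
      linear_combination (2 * (Real.pi : ℂ) * Complex.I) * hk
    have h6 : (1 : ℤ) = k * n := by exact_mod_cast h5
    have h7 : (n : ℤ) ≤ 1 := Int.le_of_dvd one_pos ⟨k, by linarith⟩
    omega
  have habsζ : ‖ζ‖ = 1 := by
    rw [hζdef]
    exact Complex.norm_exp_ofReal_mul_I _
  set w : ℂ := ((δ/2 : ℝ) : ℂ) with hwdef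
  have hw0 : w ≠ 0 := by
    simp only [hwdef, ne_eq, Complex.ofReal_eq_zero]
    intro h1; linarith
  have hwmem : w ∈ ball (0:ℂ) δ := by
    rw [Metric.mem_ball, Complex.dist_eq, sub_zero, hwdef, Complex.norm_real, Real.norm_eq_abs,
      abs_of_pos (by positivity)]
    linarith
  have hζwmem : ζ * w ∈ ball (0:ℂ) δ := by
    rw [Metric.mem_ball, Complex.dist_eq, sub_zero, norm_mul, habsζ, one_mul,
      hwdef, Complex.norm_real, Real.norm_eq_abs, abs_of_pos (by positivity)]
    linarith
  obtain ⟨x₁, hx₁, hφx₁⟩ := hball hwmem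
  obtain ⟨x₂, hx₂, hφx₂⟩ := hball hζwmem
  have hfx : f x₁ = f x₂ := by
    have e1 : f x₁ - f z₀ = w ^ n := by
      have := hx₁.1; rw [hφx₁] at this; exact this
    have e2 : f x₂ - f z₀ = (ζ * w) ^ n := by
      have := hx₂.1; rw [hφx₂] at this; exact this
    rw [mul_pow, hζn, one_mul] at e2
    linear_combination e1 - e2
  have hx12 : x₁ = x₂ := hinj hx₁.2 hx₂.2 hfx
  rw [hx12, hφx₂] at hφx₁
  exact hζ1 (mul_right_cancel₀ hw0 (by linear_combination hφx₁))

lemma mem_unitDisk_iff {z : ℂ} : z ∈ unitDisk ↔ ‖z‖ < 1 := by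
  simp [unitDisk, Complex.dist_eq]

/-- the two-variable and one-variable analytic characterizations of
uniformly convex functions agree. -/
theorem ucv_two_variable_iff_one_variable (f : ℂ → ℂ) (hf : IsNormalized f)
    (hinj : Set.InjOn f unitDisk) :
    (∀ z ∈ unitDisk, ∀ ζ ∈ unitDisk,
        0 ≤ (1 + (z - ζ) * deriv (deriv f) z / deriv f z).re) ↔
    (∀ z ∈ unitDisk,
        ‖z * deriv (deriv f) z / deriv f z‖
          < (1 + z * deriv (deriv f) z / deriv f z).re) := by
  constructor
  · -- two-variable ⇒ one-variable
    intro h1 z hz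
    by_cases hfz : deriv f z = 0
    · rw [hfz, div_zero]
      simp
    · set A : ℂ := deriv (deriv f) z / deriv f z with hA
      have habsz : ‖z‖ < 1 := mem_unitDisk_iff.mp hz
      have hrw : ∀ ζ' : ℂ, (z - ζ') * deriv (deriv f) z / deriv f z
          = z * A - ζ' * A := by
        intro ζ'
        rw [mul_div_assoc, ← hA]
        ring
      have key : ∀ s : ℝ, 0 ≤ s → s < 1 → s * ‖A‖ ≤ (1 + z * A).re := by
        intro s hs0 hs1
        by_cases hA0 : A = 0
        · simp [hA0]
        · set ζ' : ℂ := (s : ℂ) * ((‖A‖)⁻¹ : ℝ) * (starRingEnd ℂ) A with hζ'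
          have habsA : (0:ℝ) < ‖A‖ := norm_pos_iff.mpr hA0
          have hζ'mem : ζ' ∈ unitDisk := by
            rw [mem_unitDisk_iff, hζ']
            simp only [norm_mul, Complex.norm_real, Real.norm_eq_abs, Complex.norm_conj]
            rw [_root_.abs_of_nonneg hs0, _root_.abs_of_nonneg (by positivity)]
            rw [mul_assoc, inv_mul_cancel₀ (ne_of_gt habsA), mul_one]
            exact hs1
          have hyp := h1 z hz ζ' hζ'mem
          rw [hrw] at hyp
          have hζ'A : ζ' * A = ((s * ‖A‖ : ℝ) : ℂ) := by
            have e1 : ζ' * A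
                = (s : ℂ) * ((‖A‖)⁻¹ : ℝ) * (A * (starRingEnd ℂ) A) := by
              rw [hζ']; ring
            rw [e1, Complex.mul_conj, Complex.normSq_eq_norm_sq]
            have hAc : ((‖A‖ : ℝ):ℂ) ≠ 0 := by
              exact_mod_cast ne_of_gt habsA
            push_cast
            field_simp [hAc]
          rw [hζ'A] at hyp
          have e2 : (1 + (z * A - ((s * ‖A‖ : ℝ) : ℂ))).re
              = (1 + z * A).re - s * ‖A‖ := by
            simp [Complex.add_re, Complex.sub_re, Complex.ofReal_re]
            ring
          rw [e2] at hyp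
          linarith
      have hgoalrw : z * deriv (deriv f) z / deriv f z = z * A := by
        rw [mul_div_assoc, ← hA]
      rw [hgoalrw]
      by_cases hA0 : A = 0
      · simp [hA0]
      · have habsA : (0:ℝ) < ‖A‖ := norm_pos_iff.mpr hA0
        have hs0 : (0:ℝ) ≤ (1 + ‖z‖)/2 := by positivity
        have hs1 : (1 + ‖z‖)/2 < 1 := by linarith
        have hzs : ‖z‖ < (1 + ‖z‖)/2 := by linarith
        calc ‖z * A‖ = ‖z‖ * ‖A‖ := norm_mul _ _
          _ < ((1 + ‖z‖)/2) * ‖A‖ :=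
              mul_lt_mul_of_pos_right hzs habsA
          _ ≤ (1 + z * A).re := key _ hs0 hs1
  · -- one-variable ⇒ two-variable
    intro h2 z hz ζ hζ
    have hopen : IsOpen unitDisk := isOpen_ball
    have hd : ∀ w ∈ unitDisk, deriv f w ≠ 0 := fun w hw =>
      deriv_ne_zero_of_injOn hf.1 hinj hw
    have hAn : AnalyticOnNhd ℂ f unitDisk := hf.1.analyticOnNhd hopen
    have hAn' : AnalyticOnNhd ℂ (deriv f) unitDisk := hAn.deriv_of_isOpen hopen
    have hAn'' : AnalyticOnNhd ℂ (deriv (deriv f)) unitDisk :=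
      hAn'.deriv_of_isOpen hopen
    set A : ℂ → ℂ := fun w => deriv (deriv f) w / deriv f w with hA
    have hAdiff : DifferentiableOn ℂ A unitDisk :=
      DifferentiableOn.div hAn''.differentiableOn hAn'.differentiableOn hd
    set g : ℂ → ℂ := fun w => 1 + w * A w - ζ * A w with hg
    have hgdiff : DifferentiableOn ℂ g unitDisk := by
      apply DifferentiableOn.sub
      · exact (differentiableOn_const _).add (differentiableOn_id.mul hAdiff)
      · exact (differentiableOn_const _).mul hAdiff
    have habsz : ‖z‖ < 1 := mem_unitDisk_iff.mp hz
    have habsζ : ‖ζ‖ < 1 := mem_unitDisk_iff.mp hζ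
    set ρ : ℝ := (max (‖z‖) (‖ζ‖) + 1)/2 with hρ
    have hmax0 : (0:ℝ) ≤ max (‖z‖) (‖ζ‖) :=
      le_trans (norm_nonneg z) (le_max_left _ _)
    have hρ0 : (0:ℝ) < ρ := by rw [hρ]; linarith
    have hρ1 : ρ < 1 := by
      rw [hρ]
      have : max (‖z‖) (‖ζ‖) < 1 := max_lt habsz habsζ
      linarith
    have hzρ : ‖z‖ ≤ ρ := by
      rw [hρ]
      have h3 : ‖z‖ ≤ max (‖z‖) (‖ζ‖) := le_max_left _ _
      have h4 : max (‖z‖) (‖ζ‖) < 1 := max_lt habsz habsζ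
      linarith
    have hζρ : ‖ζ‖ ≤ ρ := by
      rw [hρ]
      have h3 : ‖ζ‖ ≤ max (‖z‖) (‖ζ‖) := le_max_right _ _
      have h4 : max (‖z‖) (‖ζ‖) < 1 := max_lt habsz habsζ
      linarith
    have hsub : closedBall (0:ℂ) ρ ⊆ unitDisk := Metric.closedBall_subset_ball hρ1
    set G : ℂ → ℂ := fun w => Complex.exp (-(g w)) with hG
    have hGd : DifferentiableOn ℂ G unitDisk := hgdiff.neg.cexp
    have hdc : DiffContOnCl ℂ G (ball (0:ℂ) ρ) := by
      apply DifferentiableOn.diffContOnCl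
      rw [closure_ball _ (ne_of_gt hρ0)]
      exact hGd.mono hsub
    have hbound : ∀ w ∈ frontier (ball (0:ℂ) ρ), ‖G w‖ ≤ 1 := by
      intro w hw
      rw [frontier_ball _ (ne_of_gt hρ0)] at hw
      have habsw : ‖w‖ = ρ := by
        have := mem_sphere_iff_norm.mp hw
        simpa [Complex.dist_eq] using this
      have hwU : w ∈ unitDisk := by
        rw [mem_unitDisk_iff, habsw]; exact hρ1
      have h2w := h2 w hwU
      have hrw2 : w * deriv (deriv f) w / deriv f w = w * A w := by
        rw [mul_div_assoc]
      rw [hrw2] at h2w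
      have hre : (ζ * A w).re ≤ ρ * ‖A w‖ := by
        calc (ζ * A w).re ≤ ‖ζ * A w‖ := Complex.re_le_norm _
          _ = ‖ζ‖ * ‖A w‖ := norm_mul _ _
          _ ≤ ρ * ‖A w‖ :=
            mul_le_mul_of_nonneg_right hζρ (norm_nonneg _)
      have habswA : ‖w * A w‖ = ρ * ‖A w‖ := by
        rw [norm_mul, habsw]
      have hgre : 0 ≤ (g w).re := by
        have e3 : (g w).re = (1 + w * A w).re - (ζ * A w).re := by
          simp [hg, Complex.sub_re]
        rw [e3]
        have := h2w
        rw [habswA] at this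
        linarith
      rw [hG]
      simp only [Complex.norm_exp]
      rw [Real.exp_le_one_iff]
      simp only [Complex.neg_re]
      linarith
    have hzcl : z ∈ closure (ball (0:ℂ) ρ) := by
      rw [closure_ball _ (ne_of_gt hρ0), Metric.mem_closedBall, Complex.dist_eq, sub_zero]
      exact hzρ
    have hfin := Complex.norm_le_of_forall_mem_frontier_norm_le isBounded_ball hdc hbound hzcl
    have hgz : 0 ≤ (g z).re := by
      rw [hG] at hfin
      simp only [Complex.norm_exp, Real.exp_le_one_iff,
        Complex.neg_re] at hfin
      linarith
    have e4 : 1 + (z - ζ) * deriv (deriv f) z / deriv f z = g z := by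
      rw [mul_div_assoc]
      show 1 + (z - ζ) * A z = g z
      rw [hg]
      ring
    rw [e4]
    exact hgz
end
end

section
/- Let A ∈ ℂ with |A| < 1 and let F₁(z) = z/(1 − Az). Then F₁ ∈ UST if and only if |A| ≤ 1/√2. -/
open Complex Metric Set

noncomputable section

lemma aux_mem (z : ℂ) (hz : z ∈ unitDisk) : ‖z‖ < 1 := by
  simpa [unitDisk, Complex.dist_eq] using hz

lemma aux_mem' (z : ℂ) (hz : ‖z‖ < 1) : z ∈ unitDisk := by
  simpa [unitDisk, Complex.dist_eq] using hz

lemma aux_den_ne (A z : ℂ) (hA : ‖A‖ < 1) (hz : ‖z‖ < 1) :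
    (1 : ℂ) - A * z ≠ 0 := by
  intro h
  have h1 : A * z = 1 := by linear_combination -h
  have : ‖A * z‖ < 1 := by
    rw [norm_mul]
    calc ‖A‖ * ‖z‖ ≤ ‖A‖ * 1 :=
          mul_le_mul_of_nonneg_left hz.le (norm_nonneg A)
      _ < 1 := by simpa using hA
  rw [h1] at this; simp at this

lemma aux_hasDeriv (A z : ℂ) (h : (1 : ℂ) - A * z ≠ 0) :
    HasDerivAt (fun z => z / (1 - A * z)) (1 / (1 - A * z) ^ 2) z := by
  have h1 : HasDerivAt (fun w : ℂ => 1 - A * w) (-A) z := by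
    simpa using ((hasDerivAt_id z).const_mul A).const_sub 1
  have := (hasDerivAt_id z).div h1 h
  refine this.congr_deriv ?_
  congr 1
  simp only [id]
  ring

lemma aux_deriv (A z : ℂ) (h : (1 : ℂ) - A * z ≠ 0) :
    deriv (fun z => z / (1 - A * z)) z = 1 / (1 - A * z) ^ 2 :=
  (aux_hasDeriv A z h).deriv

lemma aux_ratio (A z ζ : ℂ) (hz : (1 : ℂ) - A * z ≠ 0) (hζ : (1 : ℂ) - A * ζ ≠ 0)
    (hne : z ≠ ζ) :
    (z - ζ) * deriv (fun z => z / (1 - A * z)) z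
      / ((fun z => z / (1 - A * z)) z - (fun z => z / (1 - A * z)) ζ)
    = (1 - A * ζ) / (1 - A * z) := by
  rw [aux_deriv A z hz]
  have hzζ : z - ζ ≠ 0 := sub_ne_zero.mpr hne
  have hdiff : (fun z => z / (1 - A * z)) z - (fun z => z / (1 - A * z)) ζ
      = (z - ζ) / ((1 - A * z) * (1 - A * ζ)) := by
    show z / (1 - A * z) - ζ / (1 - A * ζ) = _
    rw [div_sub_div _ _ hz hζ]; ring
  rw [hdiff]
  field_simp

lemma aux_halfplane (u : ℂ) (h : Complex.normSq u ≤ 1 / 2) :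
    0 ≤ 1 - u.re ∧ u.im ^ 2 ≤ (1 - u.re) ^ 2 := by
  rw [Complex.normSq_apply] at h
  constructor <;> nlinarith [sq_nonneg (u.re - 1/2), sq_nonneg u.im, sq_nonneg (u.re - 1)]

lemma aux_normalized (A : ℂ) (hA : ‖A‖ < 1) :
    IsNormalized (fun z => z / (1 - A * z)) := by
  refine ⟨fun z hz => ?_, by simp, ?_⟩
  · exact (aux_hasDeriv A z (aux_den_ne A z hA (aux_mem z hz))).differentiableAt.differentiableWithinAt
  · rw [aux_deriv A 0 (by simp)]
    simp

lemma aux_injOn (A : ℂ) (hA : ‖A‖ < 1) :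
    Set.InjOn (fun z => z / (1 - A * z)) unitDisk := by
  intro z hz ζ hζ h
  have h1 := aux_den_ne A z hA (aux_mem z hz)
  have h2 := aux_den_ne A ζ hA (aux_mem ζ hζ)
  simp only at h
  rw [div_eq_div_iff h1 h2] at h
  linear_combination h

/-- z/(1 - Az) is uniformly starlike iff |A| ≤ 1/√2. -/
theorem ust_linear_fractional_iff (A : ℂ) (hA : ‖A‖ < 1) :
    IsUST (fun z => z / (1 - A * z)) ↔ ‖A‖ ≤ 1 / Real.sqrt 2 := by
  have hs2 : (0:ℝ) < Real.sqrt 2 := Real.sqrt_pos.mpr (by norm_num)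
  constructor
  · -- necessity
    rintro ⟨-, -, hUST⟩
    by_contra hcon
    push_neg at hcon
    have hA0 : A ≠ 0 := by
      intro h; rw [h] at hcon; simp at hcon
      nlinarith [Real.sq_sqrt (by norm_num : (2:ℝ) ≥ 0), hs2]
    set r := ‖A‖ with hr
    have hr0 : 0 < r := norm_pos_iff.mpr hA0
    set t : ℝ := (1 / Real.sqrt 2 + r) / 2 with ht
    have ht1 : 1 / Real.sqrt 2 < t := by simp only [ht]; linarith
    have ht2 : t < r := by simp only [ht]; linarith
    have ht0 : 0 < t := lt_trans (by positivity) ht1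
    -- u = t * e^{iπ/4}
    set u : ℂ := ⟨t / Real.sqrt 2, t / Real.sqrt 2⟩ with hu
    have hut : ‖u‖ = t := by
      rw [Complex.norm_def, Complex.normSq_mk]
      rw [show t / Real.sqrt 2 * (t / Real.sqrt 2) + t / Real.sqrt 2 * (t / Real.sqrt 2)
            = t ^ 2 * (2 / (Real.sqrt 2 ^ 2)) by ring]
      rw [Real.sq_sqrt (by norm_num : (0:ℝ) ≤ 2)]
      simp [Real.sqrt_sq ht0.le]
    set ζ : ℂ := u / A with hζ
    set z : ℂ := (starRingEnd ℂ) u / A with hz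
    have hζd : ‖ζ‖ < 1 := by
      rw [hζ, norm_div, hut, ← hr]
      rw [div_lt_one hr0]; exact ht2
    have hzd : ‖z‖ < 1 := by
      rw [hz, norm_div, Complex.norm_conj, hut, ← hr]
      rw [div_lt_one hr0]; exact ht2
    have hne : z ≠ ζ := by
      intro h
      rw [hz, hζ, div_eq_div_iff hA0 hA0] at h
      have : (starRingEnd ℂ) u = u := mul_right_cancel₀ hA0 h
      have him : u.im = 0 := by
        have := congrArg Complex.im this
        simp [Complex.conj_im] at this
        linarith
      have ht' : t / Real.sqrt 2 = 0 := him
      rw [div_eq_zero_iff] at ht'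
      rcases ht' with h' | h' <;> [linarith; exact absurd h' hs2.ne']
    have key := hUST z (aux_mem' z hzd) ζ (aux_mem' ζ hζd) hne
    rw [aux_ratio A z ζ (aux_den_ne A z hA hzd) (aux_den_ne A ζ hA hζd) hne] at key
    have hAζ : A * ζ = u := by rw [hζ]; field_simp
    have hAz : A * z = (starRingEnd ℂ) u := by rw [hz]; field_simp
    rw [hAζ, hAz] at key
    -- Re((1-u)/(1-conj u)) = ((1-u.re)^2 - u.im^2)/normSq < 0
    have hq : (1 : ℂ) - (starRingEnd ℂ) u ≠ 0 := by
      intro h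
      have : ‖(starRingEnd ℂ) u‖ < 1 := by rw [Complex.norm_conj, hut]; linarith [hA]
      rw [show (starRingEnd ℂ) u = 1 by linear_combination -h] at this
      simp at this
    have hnsq : 0 < Complex.normSq (1 - (starRingEnd ℂ) u) := Complex.normSq_pos.mpr hq
    rw [Complex.div_re] at key
    have hre : ((1:ℂ) - u).re = 1 - t / Real.sqrt 2 := by simp [hu]
    have him : ((1:ℂ) - u).im = -(t / Real.sqrt 2) := by simp [hu]
    have hre' : ((1:ℂ) - (starRingEnd ℂ) u).re = 1 - t / Real.sqrt 2 := by simp [hu]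
    have him' : ((1:ℂ) - (starRingEnd ℂ) u).im = t / Real.sqrt 2 := by simp [hu]
    rw [hre, him, hre', him'] at key
    -- key : 0 ≤ ((1 - t/√2)^2 - (t/√2)^2)/normSq
    have hval : (1 - t / Real.sqrt 2) * (1 - t / Real.sqrt 2) / Complex.normSq (1 - (starRingEnd ℂ) u)
        + -(t / Real.sqrt 2) * (t / Real.sqrt 2) / Complex.normSq (1 - (starRingEnd ℂ) u)
        = (1 - 2 * (t / Real.sqrt 2)) / Complex.normSq (1 - (starRingEnd ℂ) u) := by
      rw [← add_div]; congr 1; ring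
    rw [hval] at key
    have : 0 ≤ 1 - 2 * (t / Real.sqrt 2) := by
      by_contra hh
      push_neg at hh
      have := div_neg_of_neg_of_pos hh hnsq
      linarith
    -- but t > 1/√2 means 2*(t/√2) = √2 * t > 1
    have : 1 / Real.sqrt 2 < t := ht1
    have hss : Real.sqrt 2 * Real.sqrt 2 = 2 := Real.mul_self_sqrt (by norm_num)
    have h2t : 2 * (t / Real.sqrt 2) > 1 := by
      have hmono : (1 / Real.sqrt 2) / Real.sqrt 2 < t / Real.sqrt 2 := by gcongr
      rw [div_div, hss] at hmono
      linarith
    linarith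
  · -- sufficiency
    intro hAle
    refine ⟨aux_normalized A hA, aux_injOn A hA, ?_⟩
    intro z hz ζ hζ hne
    have hza := aux_mem z hz
    have hζa := aux_mem ζ hζ
    rw [aux_ratio A z ζ (aux_den_ne A z hA hza) (aux_den_ne A ζ hA hζa) hne]
    have hsq : ∀ w : ℂ, ‖w‖ < 1 → Complex.normSq (A * w) ≤ 1 / 2 := by
      intro w hw
      have h1 : ‖A * w‖ ≤ 1 / Real.sqrt 2 := by
        rw [norm_mul]
        calc ‖A‖ * ‖w‖ ≤ (1 / Real.sqrt 2) * 1 := by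
              apply mul_le_mul hAle hw.le (norm_nonneg w) (by positivity)
          _ = 1 / Real.sqrt 2 := by ring
      have h2 : ‖A * w‖ ^ 2 ≤ (1 / Real.sqrt 2) ^ 2 :=
        pow_le_pow_left₀ (norm_nonneg (A * w)) h1 2
      rw [Complex.sq_norm] at h2
      rw [div_pow, one_pow, Real.sq_sqrt (by norm_num : (0:ℝ) ≤ 2)] at h2
      exact h2
    have H1 := aux_halfplane (A * ζ) (hsq ζ hζa)
    have H2 := aux_halfplane (A * z) (hsq z hza)
    have hnsq : 0 < Complex.normSq (1 - A * z) :=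
      Complex.normSq_pos.mpr (aux_den_ne A z hA hza)
    rw [Complex.div_re, ← add_div]
    apply div_nonneg _ hnsq.le
    simp only [Complex.sub_re, Complex.sub_im, Complex.one_re, Complex.one_im, zero_sub]
    nlinarith [H1.1, H1.2, H2.1, H2.2, mul_nonneg H1.1 H2.1,
      mul_le_mul H1.2 H2.2 (sq_nonneg ((A * z).im)) (sq_nonneg (1 - (A * ζ).re)),
      sq_nonneg ((1 - (A * ζ).re) * (1 - (A * z).re) + (A * ζ).im * (A * z).im),
      sq_nonneg ((1 - (A * ζ).re) * (1 - (A * z).re) - (A * ζ).im * (A * z).im)]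
end
end

section
/- Let n ≥ 2 be an integer and A ∈ ℂ with |A| ≤ √((n+1)/(2n³)). Then the function F₂(z) = z + A·zⁿ belongs to UST. -/
open Complex Metric Set

noncomputable section

set_option maxHeartbeats 1600000

namespace Complex

/-- The complex modulus, as an absolute value. -/
def abs : AbsoluteValue ℂ ℝ where
  toFun z := ‖z‖
  map_mul' := norm_mul
  nonneg' := norm_nonneg
  eq_zero' _ := norm_eq_zero
  add_le' := norm_add_le

theorem norm_eq_abs (z : ℂ) : ‖z‖ = abs z := rfl

theorem abs_apply (z : ℂ) : abs z = Real.sqrt (normSq z) := Complex.norm_def z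

theorem abs_re_le_abs (z : ℂ) : |z.re| ≤ abs z := abs_re_le_norm z

theorem sq_abs (z : ℂ) : abs z ^ 2 = normSq z := Complex.sq_norm z

@[simp]
theorem abs_ofReal (r : ℝ) : abs (r : ℂ) = |r| := Complex.norm_real r

@[simp]
theorem abs_natCast (k : ℕ) : abs (k : ℂ) = k := Complex.norm_natCast k

@[simp]
theorem abs_two : abs 2 = 2 := Complex.norm_two

theorem abs_exp (z : ℂ) : abs (exp z) = Real.exp z.re := Complex.norm_exp z

end Complex

theorem Rm_nonneg (m u : ℝ) (hm : 1 ≤ m) (hu0 : 0 ≤ u) (hu1 : u ≤ 1) :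
    (m+2)*(m^2+1-2*u)*((m+2)*u+m) ≤ 2*(m+1)^3*m := by
  rcases le_total m 2 with hm2 | hm2
  · have hh : 0 ≤ -m^6-4*m^5+6*m^4+32*m^3+31*m^2+4*m-4 := by
      nlinarith [mul_nonneg (sub_nonneg.2 hm) (sub_nonneg.2 hm2), sq_nonneg (m-1), sq_nonneg (m-2),
        mul_nonneg (mul_nonneg (sub_nonneg.2 hm) (sub_nonneg.2 hm)) (sub_nonneg.2 hm2),
        mul_nonneg (mul_nonneg (sub_nonneg.2 hm2) (sub_nonneg.2 hm2)) (sub_nonneg.2 hm)]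
    nlinarith [sq_nonneg (4*(m+2)^2*u - (m+2)*(m^3+2*m^2-m+2)), mul_nonneg (sq_nonneg (m+2)) hh]
  · have h1u : 0 ≤ 1 - u := by linarith
    have hb2a : 0 ≤ (m+2)*(m-2)*(m^2+4*m+3) := by
      have := sub_nonneg.2 hm2
      positivity
    nlinarith [mul_nonneg h1u hb2a, mul_nonneg (sq_nonneg (1-u)) (sq_nonneg (m+2)), sq_nonneg (m+1)]

/-- Core real inequality with exact equality cases. -/
theorem core_ineq (m u w : ℝ) (hm : 1 ≤ m) (hu0 : 0 ≤ u) (hu1 : u ≤ 1) (hw : 0 ≤ w)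
    (hw2 : w^2 = (m^2-u)*(1-u)) :
    (m^2+1-2*u+2*w) * ((m+2)*u+m) * (m+2) ≤ 2*(m+1)^3*m := by
  set L : ℝ := (m+2)*u+m with hL
  have hLpos : 0 < L := by positivity
  set Rm : ℝ := 2*(m+1)^3*m - (m+2)*(m^2+1-2*u)*L with hRm
  have hRmpos : 0 ≤ Rm := by
    have := Rm_nonneg m u hm hu0 hu1
    simp only [hRm, hL]
    linarith
  set c2 : ℝ := m^8+8*m^7+30*m^6+72*m^5+121*m^4+144*m^3+120*m^2+64*m+16 with hc2
  have hc2pos : 0 < c2 := by positivity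
  set c1h : ℝ := -(m^2*(m^6+8*m^5+26*m^4+48*m^3+57*m^2+40*m+12)) with hc1h
  have key : c2 * (Rm^2 - (2*(m+2)*w*L)^2) = (c2*u + c1h)^2 := by
    have hww : w^2*w^2 = ((m^2-u)*(1-u))*((m^2-u)*(1-u)) := by rw [hw2]
    simp only [hRm, hc2, hc1h, hL]
    linear_combination (-(4:ℝ)*(m^8+8*m^7+30*m^6+72*m^5+121*m^4+144*m^3+120*m^2+64*m+16)*(m+2)^2*((m+2)*u+m)^2) * hw2
  have hB : 0 ≤ 2*(m+2)*w*L := by positivity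
  have hBR : 2*(m+2)*w*L ≤ Rm := by
    have h2 : (2*(m+2)*w*L)^2 ≤ Rm^2 := by nlinarith [key, sq_nonneg (c2*u + c1h), hc2pos]
    exact (pow_le_pow_iff_left₀ hB hRmpos (by norm_num)).1 h2
  have : (m^2+1-2*u)*L*(m+2) + 2*(m+2)*w*L ≤ (m^2+1-2*u)*L*(m+2) + Rm := by linarith
  calc (m^2+1-2*u+2*w) * L * (m+2) = (m^2+1-2*u)*L*(m+2) + 2*(m+2)*w*L := by ring
    _ ≤ (m^2+1-2*u)*L*(m+2) + Rm := this
    _ = 2*(m+1)^3*m := by simp only [hRm]; ring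

theorem reduce_ineq (n : ℝ) (hn : 2 ≤ n) (d a b s c : ℝ)
    (hab : a^2 + b^2 = 1) (hsc : c^2 + s^2 = 1) (hs : 0 ≤ s) (hc : 0 ≤ c)
    (hd : |d| ≤ n) (hb : |b| ≤ (n-1)*s) (hds : |d| * s ≤ |b| * c + |a| * s) :
    Real.sqrt ((n*a+d)^2 + (n*b)^2) + Real.sqrt ((n*a-d)^2 + (n*b)^2)
      ≤ 2*Real.sqrt (2*n^3/(n+1)) := by
  have hn1 : (0:ℝ) < n + 1 := by linarith
  set x := |b| with hxdef
  set y := |a| with hydef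
  have hx0 : 0 ≤ x := abs_nonneg b
  have hy0 : 0 ≤ y := abs_nonneg a
  have hx2 : x^2 = b^2 := _root_.sq_abs b
  have hy2 : y^2 = a^2 := _root_.sq_abs a
  have hx1 : x ≤ 1 := by nlinarith [_root_.sq_abs b, sq_nonneg a]
  have hgarg : 0 ≤ (n-1)^2 - x^2 := by nlinarith
  set g := Real.sqrt ((n-1)^2 - x^2) with hgdef
  have hg0 : 0 ≤ g := Real.sqrt_nonneg _
  have hg2 : g^2 = (n-1)^2 - x^2 := Real.sq_sqrt hgarg
  -- Step 1 : |d| ≤ g + y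
  have step1 : |d| ≤ g + y := by
    rcases eq_or_lt_of_le hs with hs0 | hs0
    · -- s = 0
      have hx00 : x = 0 := le_antisymm (by rw [← hs0] at hb; simpa using hb) hx0
      have hgv : g = n - 1 := by
        rw [hgdef, hx00]
        simpa using Real.sqrt_sq (by linarith : (0:ℝ) ≤ n - 1)
      have hyv : y = 1 := by nlinarith [hx2, hy2, hx00]
      rw [hgv, hyv]; linarith
    · have hxc : x*c ≤ s*g := by
        have h1 : (x*c)^2 ≤ (s*g)^2 := by nlinarith [_root_.sq_abs b, hg2]
        exact (pow_le_pow_iff_left₀ (by positivity) (by positivity) (by norm_num)).1 h1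
      have : |d| * s ≤ (g + y) * s := by
        calc |d| * s ≤ x*c + y*s := hds
          _ ≤ s*g + y*s := by linarith
          _ = (g+y)*s := by ring
      exact le_of_mul_le_mul_right this hs0
  -- Step 2 : d^2 * (((n+1)*x^2+(n-1))*(n+1)) ≤ 2*n^3*(n-1)
  have hd2 : d^2 ≤ (g+y)^2 := by
    have := pow_le_pow_left₀ (abs_nonneg d) step1 2
    simpa [_root_.sq_abs] using this
  have step2 : d^2 * (((n+1)*x^2+(n-1))*(n+1)) ≤ 2*n^3*(n-1) := by
    have ha2 : a^2 = 1 - x^2 := by rw [hx2]; linarith [hab]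
    have hx21 : x^2 ≤ 1 := by nlinarith
    have hcore := core_ineq (n-1) (x^2) (g*y) (by linarith) (by positivity) hx21
      (by positivity) (by rw [mul_pow, hg2, hy2, ha2])
    have ha2' : a^2 = 1 - x^2 := by rw [hx2]; linarith [hab]
    have hexp : (g+y)^2 = (n-1)^2+1-2*x^2+2*(g*y) := by
      have h' : (g+y)^2 = g^2 + y^2 + 2*(g*y) := by ring
      rw [h', hg2, hy2, ha2']; ring
    have hLpos : (0:ℝ) ≤ ((n+1)*x^2+(n-1))*(n+1) := by nlinarith [sq_nonneg x]
    calc d^2 * (((n+1)*x^2+(n-1))*(n+1)) ≤ (g+y)^2 * (((n+1)*x^2+(n-1))*(n+1)) :=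
          mul_le_mul_of_nonneg_right hd2 hLpos
      _ = ((n-1)^2+1-2*x^2+2*(g*y)) * (((n-1)+2)*x^2+(n-1)) * ((n-1)+2) := by
          rw [← hexp]; ring
      _ ≤ 2*((n-1)+1)^3*(n-1) := hcore
      _ = 2*n^3*(n-1) := by ring
  -- Step 3 : the inner sqrt bound, multiplied by (n+1)
  have hdn2 : d^2 ≤ n^2 := by nlinarith [_root_.sq_abs d, abs_nonneg d]
  have hR0' : 0 ≤ 4*n^3 - (n^2+d^2)*(n+1) := by nlinarith
  have hsq : ((n^2-d^2)^2 + 4*n^2*d^2*x^2) * (n+1)^2 ≤ (4*n^3 - (n^2+d^2)*(n+1))^2 := by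
    nlinarith [mul_le_mul_of_nonneg_left step2 (by positivity : (0:ℝ) ≤ 4*n^2)]
  -- Step 4 : conclude
  set P1 := (n*a+d)^2 + (n*b)^2 with hP1
  set P2 := (n*a-d)^2 + (n*b)^2 with hP2
  have hP1v : P1 = n^2 + d^2 + 2*n*a*d := by rw [hP1]; linear_combination (n^2)*hab
  have hP2v : P2 = n^2 + d^2 - 2*n*a*d := by rw [hP2]; linear_combination (n^2)*hab
  have hP10 : 0 ≤ P1 := by rw [hP1]; positivity
  have hP20 : 0 ≤ P2 := by rw [hP2]; positivity
  set A1 := Real.sqrt P1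
  set A2 := Real.sqrt P2
  have hA10 : 0 ≤ A1 := Real.sqrt_nonneg _
  have hA20 : 0 ≤ A2 := Real.sqrt_nonneg _
  have hA1sq : A1^2 = P1 := Real.sq_sqrt hP10
  have hA2sq : A2^2 = P2 := Real.sq_sqrt hP20
  have hprod : A1 * A2 = Real.sqrt (P1 * P2) := (Real.sqrt_mul hP10 _).symm
  have hPP : P1 * P2 = (n^2-d^2)^2 + 4*n^2*d^2*x^2 := by
    rw [hP1v, hP2v]; linear_combination (-(4:ℝ)*n^2*d^2)*hx2 + (-(4:ℝ)*n^2*d^2)*hab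
  have hsqrtPP : Real.sqrt (P1*P2) * (n+1) ≤ 4*n^3 - (n^2+d^2)*(n+1) := by
    have h1 : Real.sqrt ((P1*P2) * (n+1)^2) = Real.sqrt (P1*P2) * (n+1) := by
      rw [Real.sqrt_mul (show (0:ℝ) ≤ P1*P2 by positivity), Real.sqrt_sq (le_of_lt hn1)]
    rw [← h1, hPP]
    calc Real.sqrt (((n^2-d^2)^2 + 4*n^2*d^2*x^2) * (n+1)^2)
        ≤ Real.sqrt ((4*n^3 - (n^2+d^2)*(n+1))^2) := Real.sqrt_le_sqrt hsq
      _ = 4*n^3 - (n^2+d^2)*(n+1) := Real.sqrt_sq hR0'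
  have hsum2 : (A1+A2)^2 ≤ 8*n^3/(n+1) := by
    have hexp : (A1+A2)^2 = 2*(n^2+d^2) + 2*(A1*A2) := by
      have : (A1+A2)^2 = A1^2 + A2^2 + 2*(A1*A2) := by ring
      rw [this, hA1sq, hA2sq, hP1v, hP2v]; ring
    rw [hexp, hprod]
    have hX : Real.sqrt (P1*P2) ≤ (4*n^3 - (n^2+d^2)*(n+1))/(n+1) := by
      rw [le_div_iff₀ hn1]; exact hsqrtPP
    have heq : 2*(n^2+d^2) + 2*((4*n^3 - (n^2+d^2)*(n+1))/(n+1)) = 8*n^3/(n+1) := by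
      field_simp; ring
    linarith [hX]
  have hfin : A1 + A2 = Real.sqrt ((A1+A2)^2) := (Real.sqrt_sq (by positivity)).symm
  rw [hfin]
  calc Real.sqrt ((A1+A2)^2) ≤ Real.sqrt (8*n^3/(n+1)) := Real.sqrt_le_sqrt hsum2
    _ = Real.sqrt (4*(2*n^3/(n+1))) := by ring_nf
    _ = Real.sqrt 4 * Real.sqrt (2*n^3/(n+1)) := Real.sqrt_mul (by norm_num) _
    _ = 2*Real.sqrt (2*n^3/(n+1)) := by
        rw [show (4:ℝ) = 2^2 by norm_num, Real.sqrt_sq (by norm_num : (0:ℝ) ≤ 2)]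

theorem im_pow_le (v : ℂ) (hv : Complex.abs v = 1) : ∀ k : ℕ, |(v^k).im| ≤ k * |v.im| := by
  intro k
  induction k with
  | zero => simp
  | succ k ih =>
    have h1 : (v^(k+1)).im = (v^k).re * v.im + (v^k).im * v.re := by
      rw [pow_succ, Complex.mul_im]
    have hre : |(v^k).re| ≤ 1 := by
      have := Complex.abs_re_le_abs (v^k)
      rwa [map_pow, hv, one_pow] at this
    have hre2 : |v.re| ≤ 1 := by have := Complex.abs_re_le_abs v; rwa [hv] at this
    calc |(v^(k+1)).im| ≤ |(v^k).re * v.im| + |(v^k).im * v.re| := by rw [h1]; exact abs_add_le _ _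
      _ = |(v^k).re| * |v.im| + |(v^k).im| * |v.re| := by rw [abs_mul, abs_mul]
      _ ≤ 1 * |v.im| + (k * |v.im|) * 1 := by
          have h3 : |(v^k).re| * |v.im| ≤ 1 * |v.im| := mul_le_mul_of_nonneg_right hre (abs_nonneg _)
          have h4 : |(v^k).im| * |v.re| ≤ (k * |v.im|) * 1 :=
            mul_le_mul ih hre2 (abs_nonneg _) (by positivity)
          linarith
      _ = (k+1 : ℕ) * |v.im| := by push_cast; ring

theorem exists_unimodular_align (w : ℂ) :
    ∃ α : ℂ, Complex.abs α = 1 ∧ α * w = (Complex.abs w : ℂ) := by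
  rcases eq_or_ne w 0 with h0 | h0
  · exact ⟨1, by simp, by simp [h0]⟩
  · refine ⟨(Complex.abs w : ℂ) / w, ?_, div_mul_cancel₀ _ h0⟩
    rw [map_div₀, Complex.abs_ofReal, _root_.abs_of_nonneg (Complex.abs.nonneg w),
      div_self (Complex.abs.ne_zero h0)]

/-- Maximum principle for the sum of moduli of two entire functions on the closed unit disk. -/
theorem maxmod_pair (f g : ℂ → ℂ) (hf : Differentiable ℂ f) (hg : Differentiable ℂ g)
    (C : ℝ) (hC : ∀ u : ℂ, Complex.abs u = 1 → Complex.abs (f u) + Complex.abs (g u) ≤ C) :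
    ∀ z : ℂ, Complex.abs z ≤ 1 → Complex.abs (f z) + Complex.abs (g z) ≤ C := by
  intro z hz
  obtain ⟨α, hα1, hαf⟩ := exists_unimodular_align (f z)
  obtain ⟨β, hβ1, hβg⟩ := exists_unimodular_align (g z)
  set h : ℂ → ℂ := fun u => α * f u + β * g u with hh
  have hdiff : Differentiable ℂ h := ((hf.const_mul α).add (hg.const_mul β))
  have hbound : ∀ u ∈ frontier (ball (0:ℂ) 1), ‖h u‖ ≤ C := by
    intro u hu
    rw [frontier_ball (0:ℂ) one_ne_zero] at hu
    have hu1 : Complex.abs u = 1 := by exact (by simpa [Complex.dist_eq] using hu : ‖u‖ = 1)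
    calc ‖h u‖ ≤ Complex.abs (α * f u) + Complex.abs (β * g u) := by
          exact Complex.abs.add_le (α * f u) (β * g u)
      _ = Complex.abs (f u) + Complex.abs (g u) := by rw [map_mul, map_mul, hα1, hβ1, one_mul, one_mul]
      _ ≤ C := hC u hu1
  have hcl : z ∈ closure (ball (0:ℂ) 1) := by
    rw [closure_ball (0:ℂ) one_ne_zero]
    simpa [Complex.dist_eq] using (show ‖z‖ ≤ 1 from hz)
  have := Complex.norm_le_of_forall_mem_frontier_norm_le isBounded_ball
    (hdiff.diffContOnCl) hbound hcl
  have hval : h z = ((Complex.abs (f z) + Complex.abs (g z) : ℝ) : ℂ) := by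
    rw [hh]; push_cast; rw [hαf, hβg]
  rw [hval] at this
  rw [Complex.norm_real] at this
  exact le_trans (le_abs_self _) this

theorem torus_bound (n : ℕ) (hn : 2 ≤ n) (z ζ : ℂ) (hz : Complex.abs z = 1)
    (hζ : Complex.abs ζ = 1) :
    Complex.abs ((n:ℂ)*z^(n-1) - ∑ i ∈ Finset.range n, z^i * ζ^(n-1-i))
      + Complex.abs ((n:ℂ)*z^(n-1) + ∑ i ∈ Finset.range n, z^i * ζ^(n-1-i))
      ≤ 2*Real.sqrt (2*(n:ℝ)^3/((n:ℝ)+1)) := by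
  have hζ0 : ζ ≠ 0 := by intro h; rw [h] at hζ; simp at hζ
  have hz0 : z ≠ 0 := by intro h; rw [h] at hz; simp at hz
  set w : ℂ := z * ζ⁻¹ with hwdef
  have hw : Complex.abs w = 1 := by
    rw [hwdef, map_mul, map_inv₀, hz, hζ]; norm_num
  have hw0 : w ≠ 0 := by intro h; rw [h] at hw; simp at hw
  set v : ℂ := Complex.exp (Complex.log w / 2) with hvdef
  have hv0 : v ≠ 0 := Complex.exp_ne_zero _
  have hv2 : v^2 = w := by
    rw [hvdef, ← Complex.exp_nat_mul]
    have h2 : ((2:ℕ):ℂ) * (Complex.log w / 2) = Complex.log w := by push_cast; ring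
    rw [h2, Complex.exp_log hw0]
  have hv : Complex.abs v = 1 := by
    rw [hvdef, Complex.abs_exp]
    have h0 : (Complex.log w).re = 0 := by rw [Complex.log_re, Complex.norm_eq_abs, hw, Real.log_one]
    rw [show Complex.log w / 2 = ((1/2:ℝ):ℂ) * Complex.log w by push_cast; ring,
      Complex.re_ofReal_mul, h0, mul_zero, Real.exp_zero]
  have hconj : (starRingEnd ℂ) v = v⁻¹ := (Complex.inv_eq_conj (by rwa [Complex.norm_eq_abs])).symm
  set D : ℂ := (∑ i ∈ Finset.range n, (v^2)^i) * (v⁻¹)^(n-1) with hDdef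
  have hterm : ∀ i ∈ Finset.range n, z^i * ζ^(n-1-i) = ζ^(n-1) * w^i := by
    intro i hi
    have hi' : i ≤ n - 1 := by have := Finset.mem_range.1 hi; omega
    have hzw : z = w * ζ := by rw [hwdef]; field_simp
    rw [hzw, mul_pow]
    have h3 : ζ^i * ζ^(n-1-i) = ζ^(n-1) := by rw [← pow_add]; congr 1; omega
    calc w^i * ζ^i * ζ^(n-1-i) = w^i * (ζ^i * ζ^(n-1-i)) := by ring
      _ = w^i * ζ^(n-1) := by rw [h3]
      _ = ζ^(n-1) * w^i := by ring
  have hQfact : ∑ i ∈ Finset.range n, z^i * ζ^(n-1-i) = ζ^(n-1) * v^(n-1) * D := by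
    rw [Finset.sum_congr rfl hterm, ← Finset.mul_sum, hDdef]
    have h4 : v^(n-1) * ((∑ i ∈ Finset.range n, (v^2)^i) * (v⁻¹)^(n-1)) = (∑ i ∈ Finset.range n, (v^2)^i) := by
      rw [mul_comm, mul_assoc, inv_pow, inv_mul_cancel₀ (pow_ne_zero _ hv0), mul_one]
    rw [mul_assoc, h4]
    congr 1
    exact Finset.sum_congr rfl (fun i _ => by rw [hv2])
  have hPfact : (n:ℂ)*z^(n-1) = ζ^(n-1) * v^(n-1) * ((n:ℂ) * v^(n-1)) := by
    have hzw : z = w * ζ := by rw [hwdef]; field_simp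
    rw [hzw, mul_pow, ← hv2, ← pow_mul]
    have h5 : v^(2*(n-1)) = v^(n-1) * v^(n-1) := by rw [← pow_add]; congr 1; omega
    rw [h5]; ring
  have habs : ∀ X : ℂ, Complex.abs (ζ^(n-1) * v^(n-1) * X) = Complex.abs X := by
    intro X; simp [map_mul, map_pow, hζ, hv]
  have hsplit1 : Complex.abs ((n:ℂ)*z^(n-1) - ∑ i ∈ Finset.range n, z^i * ζ^(n-1-i))
      = Complex.abs ((n:ℂ)*v^(n-1) - D) := by
    rw [hQfact, hPfact, ← mul_sub, habs]
  have hsplit2 : Complex.abs ((n:ℂ)*z^(n-1) + ∑ i ∈ Finset.range n, z^i * ζ^(n-1-i))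
      = Complex.abs ((n:ℂ)*v^(n-1) + D) := by
    rw [hQfact, hPfact, ← mul_add, habs]
  rw [hsplit1, hsplit2]
  -- D is real
  have hDconj : (starRingEnd ℂ) D = D := by
    rw [hDdef, map_mul, map_sum, map_pow, map_inv₀, hconj, inv_inv]
    have h1 : ∀ i ∈ Finset.range n, (starRingEnd ℂ) ((v^2)^i) = ((v⁻¹)^2)^i := by
      intro i _
      rw [map_pow, map_pow, hconj]
    rw [Finset.sum_congr rfl h1]
    have h2 : ∑ i ∈ Finset.range n, ((v⁻¹)^2)^i = ∑ i ∈ Finset.range n, ((v⁻¹)^2)^(n-1-i) :=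
      (Finset.sum_range_reflect (fun i => ((v⁻¹)^2)^i) n).symm
    rw [h2, Finset.sum_mul, Finset.sum_mul]
    apply Finset.sum_congr rfl
    intro i hi
    have hi' : i ≤ n - 1 := by have := Finset.mem_range.1 hi; omega
    have hpows : v ^ (i*2) * v ^ ((n-1-i)*2) = v ^ ((n-1)*2) := by
      rw [← pow_add]; congr 1; omega
    rw [← pow_mul, ← pow_mul, inv_pow, inv_pow, inv_mul_eq_div, ← div_eq_mul_inv,
      div_eq_div_iff (pow_ne_zero _ hv0) (pow_ne_zero _ hv0), ← pow_add, ← pow_add]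
    congr 1; omega
  have hDre : ((D.re : ℝ) : ℂ) = D := Complex.conj_eq_iff_re.1 hDconj
  set d : ℝ := D.re with hddef
  set a : ℝ := (v^(n-1)).re with hadef
  set b : ℝ := (v^(n-1)).im with hbdef
  -- constraints
  have hnsq : Complex.normSq (v^(n-1)) = 1 := by
    rw [← Complex.sq_abs, map_pow, hv, one_pow, one_pow]
  have hab : a^2 + b^2 = 1 := by
    rw [Complex.normSq_apply] at hnsq; rw [hadef, hbdef]; nlinarith [hnsq]
  have hvsq : Complex.normSq v = 1 := by rw [← Complex.sq_abs, hv, one_pow]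
  have hsc : |v.re|^2 + |v.im|^2 = 1 := by
    rw [Complex.normSq_apply] at hvsq; rw [_root_.sq_abs, _root_.sq_abs]; nlinarith [hvsq]
  have hdabs : |d| = Complex.abs D := by rw [← hDre, Complex.abs_ofReal]
  have hDle : Complex.abs D ≤ (n:ℝ) := by
    rw [hDdef, map_mul, map_pow, map_inv₀, hv]
    simp only [inv_one, one_pow, mul_one]
    calc Complex.abs (∑ i ∈ Finset.range n, (v^2)^i) ≤ ∑ i ∈ Finset.range n, Complex.abs ((v^2)^i) :=
          Complex.abs.sum_le _ _
      _ = ∑ i ∈ Finset.range n, 1 := by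
          apply Finset.sum_congr rfl; intro i _
          rw [map_pow, map_pow, hv, one_pow, one_pow]
      _ = (n:ℝ) := by simp
  have hd : |d| ≤ (n:ℝ) := by rw [hdabs]; exact hDle
  have hb : |b| ≤ ((n:ℝ)-1) * |v.im| := by
    have := im_pow_le v hv (n-1)
    rw [hbdef]
    have hc : ((n-1 : ℕ) : ℝ) = (n:ℝ) - 1 := by
      have : (1:ℕ) ≤ n := by omega
      push_cast [Nat.cast_sub this]; ring
    rw [← hc]; exact this
  -- the identity d * v.im = (v^n).im
  have hgeom : (∑ i ∈ Finset.range n, (v^2)^i) * (v^2 - 1) = (v^2)^n - 1 := geom_sum_mul (v^2) n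
  have hE : D * (v - (starRingEnd ℂ) v) = v^n - (starRingEnd ℂ) (v^n) := by
    rw [map_pow, hconj]
    have e1 : v - v⁻¹ = v⁻¹ * (v^2 - 1) := by field_simp
    have e2 : (v⁻¹)^(n-1) * v⁻¹ = (v⁻¹)^n := by
      rw [← pow_succ]; congr 1; omega
    calc D * (v - v⁻¹) = (∑ i ∈ Finset.range n, (v^2)^i) * (v^2-1) * ((v⁻¹)^(n-1) * v⁻¹) := by
          rw [e1, hDdef]; ring
      _ = ((v^2)^n - 1) * (v⁻¹)^n := by rw [hgeom, e2]
      _ = v^n - (v⁻¹)^n := by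
          rw [← pow_mul, two_mul, pow_add, inv_pow]
          field_simp
          try ring
  have hdim : d * v.im = (v^n).im := by
    have him := congrArg Complex.im hE
    rw [← hDre] at him
    simp only [Complex.mul_im, Complex.sub_im, Complex.conj_im, Complex.conj_re,
      Complex.ofReal_re, Complex.ofReal_im, Complex.sub_re] at him
    linarith [him]
  have hvnim : (v^n).im = a * v.im + b * v.re := by
    have h6 : v^n = v^(n-1) * v := by rw [← pow_succ]; congr 1; omega
    rw [h6, Complex.mul_im, hadef, hbdef]
  have hds : |d| * |v.im| ≤ |b| * |v.re| + |a| * |v.im| := by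
    calc |d| * |v.im| = |d * v.im| := (abs_mul d v.im).symm
      _ = |a * v.im + b * v.re| := by rw [hdim, hvnim]
      _ ≤ |a * v.im| + |b * v.re| := abs_add_le _ _
      _ = |a| * |v.im| + |b| * |v.re| := by rw [abs_mul, abs_mul]
      _ = |b| * |v.re| + |a| * |v.im| := by ring
  -- convert the two abs to sqrt form
  have hform : ∀ ε : ℝ, (ε = 1 ∨ ε = -1) → Complex.abs ((n:ℂ)*v^(n-1) + (ε:ℂ) * D)
      = Real.sqrt (((n:ℝ)*a + ε*d)^2 + ((n:ℝ)*b)^2) := by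
    intro ε hε
    rw [← hDre, Complex.abs_apply, Complex.normSq_apply]
    congr 1
    have hre : ((n:ℂ)*v^(n-1) + (ε:ℂ) * ((d:ℝ):ℂ)).re = (n:ℝ)*a + ε*d := by
      simp [Complex.add_re, Complex.mul_re, hadef]
    have him' : ((n:ℂ)*v^(n-1) + (ε:ℂ) * ((d:ℝ):ℂ)).im = (n:ℝ)*b := by
      simp [Complex.add_im, Complex.mul_im, hbdef]
    rw [hre, him']; ring
  have hplus := hform 1 (Or.inl rfl)
  have hminus := hform (-1) (Or.inr rfl)
  simp only [Complex.ofReal_one, one_mul, Complex.ofReal_neg, neg_mul, neg_one_mul] at hplus hminus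
  have hgoal1 : Complex.abs ((n:ℂ)*v^(n-1) - D) = Real.sqrt (((n:ℝ)*a - d)^2 + ((n:ℝ)*b)^2) := by
    rw [sub_eq_add_neg, hminus]
    congr 1
    try ring
  have hgoal2 : Complex.abs ((n:ℂ)*v^(n-1) + D) = Real.sqrt (((n:ℝ)*a + d)^2 + ((n:ℝ)*b)^2) := by
    rw [← hplus]
  rw [hgoal1, hgoal2]
  have hnR : (2:ℝ) ≤ (n:ℝ) := by exact_mod_cast hn
  have := reduce_ineq (n:ℝ) hnR d a b |v.im| |v.re| hab hsc (abs_nonneg _) (abs_nonneg _)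
    hd hb hds
  linarith [this]

theorem key_bound (n : ℕ) (hn : 2 ≤ n) (z ζ : ℂ) (hz : Complex.abs z ≤ 1)
    (hζ : Complex.abs ζ ≤ 1) :
    Complex.abs ((n:ℂ)*z^(n-1) - ∑ i ∈ Finset.range n, z^i * ζ^(n-1-i))
      + Complex.abs ((n:ℂ)*z^(n-1) + ∑ i ∈ Finset.range n, z^i * ζ^(n-1-i))
      ≤ 2*Real.sqrt (2*(n:ℝ)^3/((n:ℝ)+1)) := by
  have hdiff1 : ∀ t : ℂ, Differentiable ℂ (fun u : ℂ => (n:ℂ)*u^(n-1) - ∑ i ∈ Finset.range n, u^i * t^(n-1-i)) := by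
    intro t
    apply Differentiable.sub
    · exact (differentiable_pow _).const_mul _
    · exact Differentiable.fun_sum (fun i _ => (differentiable_pow _).mul_const _)
  have hdiff1' : ∀ t : ℂ, Differentiable ℂ (fun u : ℂ => (n:ℂ)*u^(n-1) + ∑ i ∈ Finset.range n, u^i * t^(n-1-i)) := by
    intro t
    apply Differentiable.add
    · exact (differentiable_pow _).const_mul _
    · exact Differentiable.fun_sum (fun i _ => (differentiable_pow _).mul_const _)
  have hdiff2 : ∀ u : ℂ, Differentiable ℂ (fun t : ℂ => (n:ℂ)*u^(n-1) - ∑ i ∈ Finset.range n, u^i * t^(n-1-i)) := by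
    intro u
    apply Differentiable.sub
    · exact differentiable_const _
    · exact Differentiable.fun_sum (fun i _ => (differentiable_pow _).const_mul _)
  have hdiff2' : ∀ u : ℂ, Differentiable ℂ (fun t : ℂ => (n:ℂ)*u^(n-1) + ∑ i ∈ Finset.range n, u^i * t^(n-1-i)) := by
    intro u
    apply Differentiable.add
    · exact differentiable_const _
    · exact Differentiable.fun_sum (fun i _ => (differentiable_pow _).const_mul _)
  -- step A: ζ on circle, z in closed disk
  have stepA : ∀ t : ℂ, Complex.abs t = 1 → ∀ u : ℂ, Complex.abs u ≤ 1 →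
      Complex.abs ((n:ℂ)*u^(n-1) - ∑ i ∈ Finset.range n, u^i * t^(n-1-i))
        + Complex.abs ((n:ℂ)*u^(n-1) + ∑ i ∈ Finset.range n, u^i * t^(n-1-i))
        ≤ 2*Real.sqrt (2*(n:ℝ)^3/((n:ℝ)+1)) := by
    intro t ht
    exact maxmod_pair _ _ (hdiff1 t) (hdiff1' t) _ (fun u hu => torus_bound n hn u t hu ht)
  -- step B: both in closed disk
  exact maxmod_pair _ _ (hdiff2 z) (hdiff2' z) _ (fun u hu => stepA u hu z hz) ζ hζ

theorem re_div_nonneg_of (w v : ℂ) (hv : v ≠ 0)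
    (h : Complex.abs (w - v) ≤ Complex.abs (w + v)) : 0 ≤ (w / v).re := by
  have h2 : Complex.normSq (w - v) ≤ Complex.normSq (w + v) := by
    rw [← Complex.sq_abs, ← Complex.sq_abs]
    exact pow_le_pow_left₀ (Complex.abs.nonneg _) h 2
  have hnum : 0 ≤ w.re * v.re + w.im * v.im := by
    simp only [Complex.normSq_apply, Complex.add_re, Complex.add_im, Complex.sub_re,
      Complex.sub_im] at h2
    nlinarith [h2]
  rw [Complex.div_re, ← add_div]
  exact div_nonneg hnum (Complex.normSq_nonneg v)

/-- z + A zⁿ is uniformly starlike when |A| ≤ √((n+1)/(2n³)). -/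
theorem ust_monomial_perturbation (n : ℕ) (hn : 2 ≤ n) (A : ℂ)
    (hA : ‖A‖ ≤ Real.sqrt (((n : ℝ) + 1) / (2 * (n : ℝ) ^ 3))) :
    IsUST (fun z => z + A * z ^ n) := by
  have hn0 : (0:ℝ) < (n:ℝ) := by positivity
  have hnR : (2:ℝ) ≤ (n:ℝ) := by exact_mod_cast hn
  set f : ℂ → ℂ := fun z => z + A * z ^ n with hf
  set Q : ℂ → ℂ → ℂ := fun z ζ => ∑ i ∈ Finset.range n, z^i * ζ^(n-1-i) with hQ
  -- derivative
  have hder : ∀ z : ℂ, HasDerivAt f (1 + A * ((n:ℂ) * z^(n-1))) z := by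
    intro z
    exact (hasDerivAt_id z).add ((hasDerivAt_pow n z).const_mul A)
  have hderiv : ∀ z : ℂ, deriv f z = 1 + A * ((n:ℂ) * z^(n-1)) := fun z => (hder z).deriv
  -- |A| * n < 1 and the key numeric bound
  set a : ℝ := Complex.abs A with ha
  have ha0 : 0 ≤ a := Complex.abs.nonneg A
  have hXnn : (0:ℝ) ≤ ((n:ℝ)+1)/(2*(n:ℝ)^3) := by positivity
  have han : a * n < 1 := by
    have h1 : a * n ≤ Real.sqrt (((n:ℝ)+1)/(2*(n:ℝ)^3)) * n :=
      mul_le_mul_of_nonneg_right hA (le_of_lt hn0)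
    have h2 : Real.sqrt (((n:ℝ)+1)/(2*(n:ℝ)^3)) * n
        = Real.sqrt (((n:ℝ)+1)/(2*(n:ℝ)^3) * (n:ℝ)^2) := by
      rw [Real.sqrt_mul hXnn, Real.sqrt_sq (le_of_lt hn0)]
    have h3 : ((n:ℝ)+1)/(2*(n:ℝ)^3) * (n:ℝ)^2 < 1 := by
      rw [div_mul_eq_mul_div, div_lt_one (by positivity)]
      nlinarith
    have h4 : Real.sqrt (((n:ℝ)+1)/(2*(n:ℝ)^3) * (n:ℝ)^2) < 1 := by
      have := Real.sqrt_lt_sqrt (by positivity : (0:ℝ) ≤ ((n:ℝ)+1)/(2*(n:ℝ)^3) * (n:ℝ)^2) h3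
      rwa [Real.sqrt_one] at this
    calc a * n ≤ _ := h1
      _ = _ := h2
      _ < 1 := h4
  -- |Q| ≤ n on the closed disk
  have hQle : ∀ z ζ : ℂ, Complex.abs z ≤ 1 → Complex.abs ζ ≤ 1 → Complex.abs (Q z ζ) ≤ n := by
    intro z ζ hz hζ
    calc Complex.abs (Q z ζ) ≤ ∑ i ∈ Finset.range n, Complex.abs (z^i * ζ^(n-1-i)) :=
          Complex.abs.sum_le _ _
      _ ≤ ∑ i ∈ Finset.range n, 1 := by
          apply Finset.sum_le_sum
          intro i _
          rw [map_mul, map_pow, map_pow]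
          exact mul_le_one₀ (pow_le_one₀ (Complex.abs.nonneg z) hz)
            (pow_nonneg (Complex.abs.nonneg ζ) _) (pow_le_one₀ (Complex.abs.nonneg ζ) hζ)
      _ = n := by simp
  -- denominator never vanishes
  have hden : ∀ z ζ : ℂ, Complex.abs z ≤ 1 → Complex.abs ζ ≤ 1 → 1 + A * Q z ζ ≠ 0 := by
    intro z ζ hz hζ h0
    have : A * Q z ζ = -1 := by linear_combination h0
    have h1 : Complex.abs (A * Q z ζ) = 1 := by rw [this]; simp
    rw [map_mul] at h1
    have h2 : a * Complex.abs (Q z ζ) ≤ a * n := mul_le_mul_of_nonneg_left (hQle z ζ hz hζ) ha0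
    rw [h1] at h2
    linarith
  -- factorization of f z - f ζ
  have hfact : ∀ z ζ : ℂ, f z - f ζ = (z - ζ) * (1 + A * Q z ζ) := by
    intro z ζ
    have := geom_sum₂_mul z ζ n
    simp only [hf, hQ]
    linear_combination A * this.symm
  -- membership translations
  have hmem : ∀ z : ℂ, z ∈ unitDisk → Complex.abs z ≤ 1 := by
    intro z hz
    rw [unitDisk, mem_ball, Complex.dist_eq, sub_zero] at hz
    exact le_of_lt hz
  refine ⟨⟨?_, ?_, ?_⟩, ?_, ?_⟩
  · exact (Differentiable.differentiableOn
      (differentiable_id.add ((differentiable_pow n).const_mul A)))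
  · simp [hf, zero_pow (by omega : n ≠ 0)]
  · rw [hderiv 0]
    rw [zero_pow (by omega : n - 1 ≠ 0)]
    simp
  · -- injectivity
    intro z hz ζ hζ hzζ
    by_contra hne
    have h0 : f z - f ζ = 0 := by rw [hzζ]; ring
    rw [hfact] at h0
    rcases mul_eq_zero.1 h0 with h | h
    · exact hne (by linear_combination h)
    · exact hden z ζ (hmem z hz) (hmem ζ hζ) h
  · -- the UST inequality
    intro z hz ζ hζ hne
    have hzζ : z - ζ ≠ 0 := sub_ne_zero.2 hne
    have hz1 := hmem z hz
    have hζ1 := hmem ζ hζ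
    have hvne := hden z ζ hz1 hζ1
    have hrw : (z - ζ) * deriv f z / (f z - f ζ)
        = (1 + A * ((n:ℂ) * z^(n-1))) / (1 + A * Q z ζ) := by
      rw [hderiv z, hfact z ζ, mul_div_mul_left _ _ hzζ]
    rw [hrw]
    apply re_div_nonneg_of _ _ hvne
    -- |w - v| ≤ |w + v|
    have hsum := key_bound n hn z ζ hz1 hζ1
    set p : ℂ := (n:ℂ) * z^(n-1) with hp
    have hM : a * (Complex.abs (p - Q z ζ) + Complex.abs (p + Q z ζ)) ≤ 2 := by
      have e1 : Real.sqrt (((n:ℝ)+1)/(2*(n:ℝ)^3)) * Real.sqrt (2*(n:ℝ)^3/((n:ℝ)+1)) = 1 := by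
        rw [← Real.sqrt_mul hXnn]
        have e2 : ((n:ℝ)+1)/(2*(n:ℝ)^3) * (2*(n:ℝ)^3/((n:ℝ)+1)) = 1 := by
          field_simp
        rw [e2, Real.sqrt_one]
      have hMval : Real.sqrt (((n:ℝ)+1)/(2*(n:ℝ)^3)) * (2*Real.sqrt (2*(n:ℝ)^3/((n:ℝ)+1))) = 2 := by
        calc Real.sqrt (((n:ℝ)+1)/(2*(n:ℝ)^3)) * (2*Real.sqrt (2*(n:ℝ)^3/((n:ℝ)+1)))
            = 2 * (Real.sqrt (((n:ℝ)+1)/(2*(n:ℝ)^3)) * Real.sqrt (2*(n:ℝ)^3/((n:ℝ)+1))) := by ring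
          _ = 2 := by rw [e1, mul_one]
      calc a * (Complex.abs (p - Q z ζ) + Complex.abs (p + Q z ζ))
          ≤ Real.sqrt (((n:ℝ)+1)/(2*(n:ℝ)^3)) * (2*Real.sqrt (2*(n:ℝ)^3/((n:ℝ)+1))) := by
            apply mul_le_mul hA hsum (by positivity) (Real.sqrt_nonneg _)
        _ = 2 := hMval
    have hwv1 : Complex.abs ((1 + A * p) - (1 + A * Q z ζ)) = a * Complex.abs (p - Q z ζ) := by
      rw [show (1 + A * p) - (1 + A * Q z ζ) = A * (p - Q z ζ) by ring, map_mul]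
    have hwv2 : 2 - a * Complex.abs (p + Q z ζ) ≤ Complex.abs ((1 + A * p) + (1 + A * Q z ζ)) := by
      have e : (1 + A * p) + (1 + A * Q z ζ) = 2 + A * (p + Q z ζ) := by ring
      rw [e]
      set Y : ℂ := A * (p + Q z ζ) with hY
      have h5 := Complex.abs.add_le (2 + Y) (-Y)
      have e6 : (2 + Y) + (-Y) = (2:ℂ) := by ring
      rw [e6, Complex.abs.map_neg, Complex.abs_two] at h5
      have h7 : Complex.abs Y = a * Complex.abs (p + Q z ζ) := by rw [hY, map_mul]
      rw [h7] at h5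
      linarith
    rw [hwv1]
    calc a * Complex.abs (p - Q z ζ) ≤ 2 - a * Complex.abs (p + Q z ζ) := by linarith
      _ ≤ _ := hwv2
end
end

section
/- Let f ∈ UST and let a₂ = f''(0)/2. Then for every ζ ∈ 𝔻 with ζ ≠ 0, |(f(ζ)(1 − 2a₂ζ) − ζ)/ζ²| ≤ 2·Re(f(ζ)/ζ), and for every z ∈ 𝔻 with z ≠ 0, |(f(z) − z)/(z²·f'(z))| ≤ 2·Re(f(z)/(z·f'(z))). -/
open Complex Metric Set

noncomputable section

open Filter Function Topology

lemma carath {p : ℂ → ℂ} {ζ : ℂ} (hζ : ζ ∈ unitDisk) (hζ0 : ζ ≠ 0)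
    (hd : DifferentiableOn ℂ p (unitDisk \ {ζ}))
    (hre : ∀ z ∈ unitDisk \ {ζ}, 0 ≤ (p z).re) :
    ‖deriv p 0‖ ≤ 2 * (p 0).re := by
  have hopen : IsOpen (unitDisk \ {ζ}) := Metric.isOpen_ball.sdiff isClosed_singleton
  have h0mem : (0 : ℂ) ∈ unitDisk \ {ζ} :=
    ⟨by simp [unitDisk], by simpa using (Ne.symm hζ0)⟩
  have hp0re : 0 ≤ (p 0).re := hre 0 h0mem
  set d := deriv p 0 with hd_def
  have key : ∀ ε : ℝ, 0 < ε → ‖d‖ ≤ 2 * (p 0).re + 2 * ε := by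
    intro ε hε
    set c : ℂ := (starRingEnd ℂ) (p 0) + ((2 * ε : ℝ) : ℂ) with hc
    have hdenre : ∀ w ∈ unitDisk \ {ζ}, 0 < (p w + c).re := by
      intro w hw
      have := hre w hw
      simp only [hc, Complex.add_re, Complex.conj_re, Complex.ofReal_re]
      linarith
    have hdenne : ∀ w ∈ unitDisk \ {ζ}, p w + c ≠ 0 := by
      intro w hw h
      have := hdenre w hw
      rw [h] at this; simp at this
    set ω : ℂ → ℂ := fun w => (p w - p 0) / (p w + c) with hω
    have hωd : DifferentiableOn ℂ ω (unitDisk \ {ζ}) :=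
      ((hd.sub_const _).div (hd.add_const _)) hdenne
    have hωlt : ∀ w ∈ unitDisk \ {ζ}, ‖ω w‖ < 1 := by
      intro w hw
      have hns : Complex.normSq (p w - p 0) < Complex.normSq (p w + c) := by
        have h1 := hre w hw
        simp only [Complex.normSq_apply, Complex.sub_re, Complex.sub_im, Complex.add_re,
          Complex.add_im, hc, Complex.conj_re, Complex.conj_im, Complex.ofReal_re,
          Complex.ofReal_im, add_zero]
        nlinarith [sq_nonneg ((p w).im - (p 0).im), hp0re]
      have habs : ‖p w - p 0‖ < ‖p w + c‖ := by
        rw [Complex.norm_def, Complex.norm_def]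
        exact Real.sqrt_lt_sqrt (Complex.normSq_nonneg _) hns
      have hpos : 0 < ‖p w + c‖ :=
        (norm_nonneg _).trans_lt habs
      rw [hω]
      simp only [norm_div]
      exact div_lt_one hpos |>.mpr habs
    set W : ℂ → ℂ := Function.update ω ζ (limUnder (𝓝[≠] ζ) ω) with hW
    have hWd : DifferentiableOn ℂ W unitDisk := by
      refine Complex.differentiableOn_update_limUnder_of_bddAbove
        (Metric.isOpen_ball.mem_nhds hζ) hωd ⟨1, ?_⟩
      rintro x ⟨w, hw, rfl⟩
      exact (hωlt w hw).le
    have hWeq : ∀ w : ℂ, w ≠ ζ → W w = ω w := fun w hwζ => Function.update_of_ne hwζ _ _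
    have hW0 : W 0 = 0 := by
      rw [hWeq 0 (Ne.symm hζ0)]
      simp [hω]
    have hWle : ∀ w ∈ unitDisk, ‖W w‖ ≤ 1 := by
      intro w hw
      rcases eq_or_ne w ζ with rfl | hwζ
      · have hcont : ContinuousAt W w :=
          (hWd.differentiableAt (Metric.isOpen_ball.mem_nhds hw)).continuousAt
        have htend : Tendsto (fun z => ‖W z‖) (𝓝[≠] w) (𝓝 (‖W w‖)) :=
          (continuous_norm.continuousAt.comp hcont).continuousWithinAt.tendsto
        refine le_of_tendsto htend ?_
        filter_upwards [self_mem_nhdsWithin,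
          mem_nhdsWithin_of_mem_nhds (Metric.isOpen_ball.mem_nhds hw)] with z hz1 hz2
        rw [hWeq z hz1]
        exact (hωlt z ⟨hz2, hz1⟩).le
      · rw [hWeq w hwζ]
        exact (hωlt w ⟨hw, hwζ⟩).le
    have hschwarz : ∀ r : ℝ, 1 < r → ‖deriv W 0‖ ≤ r := by
      intro r hr
      have hmaps : MapsTo W (ball (0 : ℂ) 1) (ball (W 0) r) := by
        intro w hw
        rw [hW0, mem_ball, dist_zero_right]
        exact lt_of_le_of_lt (hWle w hw) hr
      have := Complex.norm_deriv_le_div_of_mapsTo_ball (hWd : DifferentiableOn ℂ W (ball 0 1))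
        (hmaps.mono_right ball_subset_closedBall) one_pos
      simpa using this
    have hWder1 : ‖deriv W 0‖ ≤ 1 := by
      by_contra h
      push_neg at h
      have := hschwarz ((1 + ‖deriv W 0‖) / 2) (by linarith)
      linarith
    have hderiv_eq : deriv W 0 = deriv ω 0 := by
      apply Filter.EventuallyEq.deriv_eq
      filter_upwards [isOpen_compl_singleton.mem_nhds
        (by simpa using (Ne.symm hζ0) : (0:ℂ) ∈ ({ζ} : Set ℂ)ᶜ)] with w hw
      exact hWeq w hw
    -- compute deriv ω 0
    have hpda : HasDerivAt p d 0 :=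
      ((hd.differentiableAt (hopen.mem_nhds h0mem)).hasDerivAt)
    have hden0 : p 0 + c = ((2 * ((p 0).re + ε) : ℝ) : ℂ) := by
      rw [hc, ← add_assoc, Complex.add_conj]
      push_cast
      ring
    have hden0ne : p 0 + c ≠ 0 := by
      rw [hden0]
      exact_mod_cast (by positivity : (2 * ((p 0).re + ε) : ℝ) ≠ 0)
    have hωder : HasDerivAt ω ((d * (p 0 + c) - (p 0 - p 0) * d) / (p 0 + c) ^ 2) 0 :=
      (hpda.sub_const _).div (hpda.add_const _) hden0ne
    have hωder' : deriv ω 0 = d / (p 0 + c) := by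
      rw [hωder.deriv]
      field_simp
      ring
    have habsder : ‖deriv ω 0‖ = ‖d‖ / (2 * ((p 0).re + ε)) := by
      rw [hωder', norm_div, hden0, Complex.norm_real, Real.norm_eq_abs, abs_of_pos (by positivity)]
    rw [hderiv_eq, habsder, div_le_one (by positivity)] at hWder1
    linarith
  refine le_of_forall_pos_le_add fun ε hε => ?_
  have := key (ε / 2) (by linarith)
  linarith

/-- dslope value at 0. -/
lemma dslope_zero_eq {f : ℂ → ℂ} (hf0 : f 0 = 0) {ζ : ℂ} (hζ0 : ζ ≠ 0) :
    dslope f ζ 0 = f ζ / ζ := by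
  rw [dslope_of_ne f (Ne.symm hζ0), slope_def_field, hf0]
  rw [zero_sub, zero_sub, neg_div_neg_eq]

/-- Derivative of dslope at 0. -/
lemma hasDerivAt_dslope_zero {f : ℂ → ℂ} (hfd : DifferentiableAt ℂ f 0) (hf0 : f 0 = 0)
    {ζ : ℂ} (hζ0 : ζ ≠ 0) :
    HasDerivAt (dslope f ζ) (f ζ / ζ ^ 2 - deriv f 0 / ζ) 0 := by
  have hsub : (0 : ℂ) - ζ ≠ 0 := sub_ne_zero.2 (Ne.symm hζ0)
  have hA : HasDerivAt (fun w => f w - f ζ) (deriv f 0) 0 := hfd.hasDerivAt.sub_const _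
  have hB : HasDerivAt (fun w : ℂ => (w - ζ)⁻¹) (-1 / ((0:ℂ) - ζ) ^ 2) 0 := by
    exact (((hasDerivAt_id (0:ℂ)).sub_const ζ).inv hsub)
  have hC := hA.mul hB
  have heq : dslope f ζ =ᶠ[𝓝 0] fun w => (f w - f ζ) * (w - ζ)⁻¹ := by
    filter_upwards [isOpen_compl_singleton.mem_nhds
      (by simpa using (Ne.symm hζ0) : (0:ℂ) ∈ ({ζ} : Set ℂ)ᶜ)] with w hw
    rw [dslope_of_ne f hw, slope_def_field, div_eq_mul_inv]
  have hD := hC.congr_of_eventuallyEq heq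
  refine hD.congr_deriv ?_
  rw [hf0, zero_sub, zero_sub]
  field_simp [hζ0]
  ring

/-- Goodman's positivity inequalities for uniformly starlike functions. -/
theorem ust_positive_real_part_inequalities (f : ℂ → ℂ) (hf : IsUST f) (a₂ : ℂ)
    (ha₂ : a₂ = deriv (deriv f) 0 / 2) :
    (∀ ζ ∈ unitDisk, ζ ≠ 0 →
        ‖(f ζ * (1 - 2 * a₂ * ζ) - ζ) / ζ ^ 2‖ ≤ 2 * (f ζ / ζ).re) ∧
    (∀ z ∈ unitDisk, z ≠ 0 →
        ‖(f z - z) / (z ^ 2 * deriv f z)‖ ≤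
          2 * (f z / (z * deriv f z)).re) := by
  obtain ⟨⟨hfd, hf0, hf'0⟩, hinj, hust⟩ := hf
  have h0disk : (0 : ℂ) ∈ unitDisk := by simp [unitDisk]
  have hfne : ∀ ζ ∈ unitDisk, ζ ≠ 0 → f ζ ≠ 0 := by
    intro ζ hζ hζ0 h
    exact hζ0 (hinj hζ h0disk (h.trans hf0.symm))
  have hgd : ∀ ζ ∈ unitDisk, DifferentiableOn ℂ (dslope f ζ) unitDisk := fun ζ hζ =>
    (Complex.differentiableOn_dslope (Metric.isOpen_ball.mem_nhds hζ)).mpr hfd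
  have hgne : ∀ ζ ∈ unitDisk, ∀ w ∈ unitDisk \ {ζ}, dslope f ζ w ≠ 0 := by
    intro ζ hζ w hw
    have hwζ : w ≠ ζ := hw.2
    rw [dslope_of_ne f hwζ, slope_def_field]
    exact div_ne_zero (sub_ne_zero.2 fun h => hwζ (hinj hw.1 hζ h))
      (sub_ne_zero.2 hwζ)
  have hfd0 : DifferentiableAt ℂ f 0 := hfd.differentiableAt (Metric.isOpen_ball.mem_nhds h0disk)
  constructor
  · -- part (a)
    intro ζ hζ hζ0
    have hfζ : f ζ ≠ 0 := hfne ζ hζ hζ0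
    set g : ℂ → ℂ := dslope f ζ with hg
    have hFd : DifferentiableOn ℂ (deriv f) unitDisk :=
      ((hfd.analyticOnNhd Metric.isOpen_ball).deriv).differentiableOn
    set p : ℂ → ℂ := fun w => deriv f w / g w with hp
    have hpd : DifferentiableOn ℂ p (unitDisk \ {ζ}) :=
      (hFd.mono diff_subset).div ((hgd ζ hζ).mono diff_subset) (hgne ζ hζ)
    have hpre : ∀ w ∈ unitDisk \ {ζ}, 0 ≤ (p w).re := by
      intro w hw
      have hwζ : w ≠ ζ := hw.2
      have h1 := hust w hw.1 ζ hζ hwζ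
      have h2 : p w = (w - ζ) * deriv f w / (f w - f ζ) := by
        rw [hp]
        simp only [hg]
        rw [dslope_of_ne f hwζ, slope_def_field, div_div_eq_mul_div, mul_comm]
      rw [h2]; exact h1
    have key := carath hζ hζ0 hpd hpre
    have hg0 : g 0 = f ζ / ζ := dslope_zero_eq hf0 hζ0
    have hg0ne : g 0 ≠ 0 := by rw [hg0]; exact div_ne_zero hfζ hζ0
    have hp0 : p 0 = ζ / f ζ := by
      simp only [hp, hg0, hf'0, one_div, inv_div]
    have hgder : HasDerivAt g (f ζ / ζ ^ 2 - deriv f 0 / ζ) 0 :=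
      hasDerivAt_dslope_zero hfd0 hf0 hζ0
    have hFder : HasDerivAt (deriv f) (deriv (deriv f) 0) 0 :=
      (hFd.differentiableAt (Metric.isOpen_ball.mem_nhds h0disk)).hasDerivAt
    have hpder : HasDerivAt p
        ((deriv (deriv f) 0 * g 0 - deriv f 0 * (f ζ / ζ ^ 2 - deriv f 0 / ζ)) / g 0 ^ 2) 0 :=
      hFder.div hgder hg0ne
    have hD2 : deriv (deriv f) 0 = 2 * a₂ := by rw [ha₂]; ring
    have hderivp : deriv p 0 = -((f ζ * (1 - 2 * a₂ * ζ) - ζ) / (f ζ) ^ 2) := by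
      rw [hpder.deriv, hg0, hf'0, hD2]
      field_simp [hfζ, hζ0]
      ring
    rw [hderivp, hp0] at key
    -- now pure algebra
    have hZ : (0:ℝ) < ‖ζ‖ := by
      simpa [norm_pos_iff] using hζ0
    have hF : (0:ℝ) < ‖f ζ‖ := by
      simpa [norm_pos_iff] using hfζ
    have hre_id : (ζ / f ζ).re =
        (f ζ / ζ).re * (‖ζ‖) ^ 2 / (‖f ζ‖) ^ 2 := by
      have h1 : ζ / f ζ = (f ζ / ζ)⁻¹ := by rw [inv_div]
      rw [h1, Complex.inv_re, Complex.normSq_div, ← Complex.sq_norm, ← Complex.sq_norm]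
      field_simp
    have hkey' : ‖f ζ * (1 - 2 * a₂ * ζ) - ζ‖ / (‖f ζ‖) ^ 2
        ≤ 2 * ((f ζ / ζ).re * (‖ζ‖) ^ 2 / (‖f ζ‖) ^ 2) := by
      calc ‖f ζ * (1 - 2 * a₂ * ζ) - ζ‖ / (‖f ζ‖) ^ 2
          = ‖-((f ζ * (1 - 2 * a₂ * ζ) - ζ) / (f ζ) ^ 2)‖ := by
            rw [norm_neg, norm_div, norm_pow]
        _ ≤ 2 * (ζ / f ζ).re := key
        _ = 2 * ((f ζ / ζ).re * (‖ζ‖) ^ 2 / (‖f ζ‖) ^ 2) := by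
            rw [hre_id]
    have habs : ‖(f ζ * (1 - 2 * a₂ * ζ) - ζ) / ζ ^ 2‖
        = ‖f ζ * (1 - 2 * a₂ * ζ) - ζ‖ / (‖ζ‖) ^ 2 := by
      rw [norm_div, norm_pow]
    have h3 : ‖f ζ * (1 - 2 * a₂ * ζ) - ζ‖ ≤ 2 * ((f ζ / ζ).re * (‖ζ‖) ^ 2) := by
      have h := hkey'
      rw [show 2 * ((f ζ / ζ).re * (‖ζ‖) ^ 2 / (‖f ζ‖) ^ 2)
          = (2 * ((f ζ / ζ).re * (‖ζ‖) ^ 2)) / (‖f ζ‖) ^ 2 by ring] at h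
      exact (div_le_div_iff_of_pos_right (by positivity)).mp h
    rw [habs, div_le_iff₀ (by positivity)]
    nlinarith [h3]
  · -- part (b)
    intro z hz hz0
    rcases eq_or_ne (deriv f z) 0 with hd0 | hd0
    · simp [hd0]
    have hfz : f z ≠ 0 := hfne z hz hz0
    set g : ℂ → ℂ := dslope f z with hg
    set p : ℂ → ℂ := fun w => deriv f z / g w with hp
    have hpd : DifferentiableOn ℂ p (unitDisk \ {z}) :=
      (differentiableOn_const _).div ((hgd z hz).mono diff_subset) (hgne z hz)
    have hpre : ∀ w ∈ unitDisk \ {z}, 0 ≤ (p w).re := by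
      intro w hw
      have hwz : w ≠ z := hw.2
      have h1 := hust z hz w hw.1 (Ne.symm hwz)
      have h2 : p w = (z - w) * deriv f z / (f z - f w) := by
        rw [hp]
        simp only [hg]
        rw [dslope_of_ne f hwz, slope_def_field]
        have hwz' : w - z ≠ 0 := sub_ne_zero.2 hwz
        have hfwz : f w - f z ≠ 0 := sub_ne_zero.2 fun h => hwz (hinj hw.1 hz h)
        rw [div_div_eq_mul_div]
        rw [show f w - f z = -(f z - f w) by ring, show w - z = -(z - w) by ring,
          div_neg, mul_neg, neg_div, neg_neg, mul_comm]
      rw [h2]; exact h1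
    have key := carath hz hz0 hpd hpre
    have hg0 : g 0 = f z / z := dslope_zero_eq hf0 hz0
    have hg0ne : g 0 ≠ 0 := by rw [hg0]; exact div_ne_zero hfz hz0
    have hp0 : p 0 = z * deriv f z / f z := by
      simp only [hp, hg0, div_div_eq_mul_div, mul_comm]
    have hgder : HasDerivAt g (f z / z ^ 2 - deriv f 0 / z) 0 :=
      hasDerivAt_dslope_zero hfd0 hf0 hz0
    have hpder : HasDerivAt p
        ((0 * g 0 - deriv f z * (f z / z ^ 2 - deriv f 0 / z)) / g 0 ^ 2) 0 :=
      (hasDerivAt_const 0 (deriv f z)).div hgder hg0ne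
    have hderivp : deriv p 0 = -(deriv f z * (f z - z) / (f z) ^ 2) := by
      rw [hpder.deriv, hg0, hf'0]
      field_simp
      ring
    rw [hderivp, hp0] at key
    have hZ : (0:ℝ) < ‖z‖ := by simpa [norm_pos_iff] using hz0
    have hF : (0:ℝ) < ‖f z‖ := by simpa [norm_pos_iff] using hfz
    have hD : (0:ℝ) < ‖deriv f z‖ := by simpa [norm_pos_iff] using hd0
    have habskey : ‖-(deriv f z * (f z - z) / (f z) ^ 2)‖
        = ‖deriv f z‖ * ‖f z - z‖ / (‖f z‖) ^ 2 := by
      rw [norm_neg, norm_div, norm_mul, norm_pow]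
    rw [habskey] at key
    have hDA : ‖deriv f z‖ * ‖f z - z‖
        ≤ 2 * (z * deriv f z / f z).re * (‖f z‖) ^ 2 :=
      (div_le_iff₀ (by positivity)).mp key
    have hre_id : (f z / (z * deriv f z)).re
        = (z * deriv f z / f z).re * (‖f z‖) ^ 2
          / ((‖z‖) ^ 2 * (‖deriv f z‖) ^ 2) := by
      have h1 : f z / (z * deriv f z) = (z * deriv f z / f z)⁻¹ := by rw [inv_div]
      rw [h1, Complex.inv_re, Complex.normSq_div, Complex.normSq_mul,
        ← Complex.sq_norm, ← Complex.sq_norm, ← Complex.sq_norm]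
      field_simp
    have habs : ‖(f z - z) / (z ^ 2 * deriv f z)‖
        = ‖f z - z‖ / ((‖z‖) ^ 2 * ‖deriv f z‖) := by
      rw [norm_div, norm_mul, norm_pow]
    rw [habs, hre_id]
    rw [show 2 * ((z * deriv f z / f z).re * (‖f z‖) ^ 2
        / ((‖z‖) ^ 2 * (‖deriv f z‖) ^ 2))
        = (2 * (z * deriv f z / f z).re * (‖f z‖) ^ 2)
          / ((‖z‖) ^ 2 * (‖deriv f z‖) ^ 2) by ring]
    rw [div_le_div_iff₀ (by positivity) (by positivity)]
    nlinarith [mul_le_mul_of_nonneg_right hDA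
      (by positivity : (0:ℝ) ≤ (‖z‖) ^ 2 * ‖deriv f z‖)]
end
end

section
/- Let f be normalized analytic on 𝔻 and suppose Re(f'(w)/f'(z)) > 0 for all z, w ∈ 𝔻. Then f is univalent on 𝔻 and f ∈ UST. -/
open Complex Metric Set intervalIntegral

noncomputable section

lemma key_lemma (f : ℂ → ℂ) (hd : DifferentiableOn ℂ f unitDisk)
    (h : ∀ z ∈ unitDisk, ∀ w ∈ unitDisk, 0 < (deriv f w / deriv f z).re)
    {z ζ : ℂ} (hz : z ∈ unitDisk) (hζ : ζ ∈ unitDisk) (hne : z ≠ ζ) :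
    0 < ((f z - f ζ) / ((z - ζ) * deriv f z)).re := by
  set c := deriv f z with hc_def
  have hc : c ≠ 0 := by
    intro h0
    have := h z hz z hz
    rw [← hc_def, h0] at this
    simp at this
  set γ : ℝ → ℂ := fun t => ζ + (t : ℂ) * (z - ζ) with hγ_def
  have hmem : ∀ t ∈ Icc (0:ℝ) 1, γ t ∈ unitDisk := by
    intro t ht
    have := (convex_ball (0:ℂ) 1).add_smul_sub_mem hζ hz ht
    simpa [hγ_def, Complex.real_smul, unitDisk] using this
  have hγ' : ∀ t : ℝ, HasDerivAt γ (z - ζ) t := by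
    intro t
    have h1 : HasDerivAt (fun t : ℝ => (t : ℂ)) 1 t := by
      simpa using (hasDerivAt_id t).ofReal_comp
    have h2 := (h1.mul_const (z - ζ)).const_add ζ
    rw [one_mul] at h2
    exact h2
  have hγcont : Continuous γ := by
    fun_prop
  have hdcont : ContinuousOn (deriv f) unitDisk :=
    ((hd.analyticOnNhd isOpen_ball).deriv).continuousOn
  have hcont : ContinuousOn (fun t : ℝ => deriv f (γ t)) (Icc 0 1) :=
    hdcont.comp hγcont.continuousOn hmem
  have hfd : ∀ t ∈ uIcc (0:ℝ) 1, HasDerivAt (fun t => f (γ t)) (deriv f (γ t) * (z - ζ)) t := by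
    intro t ht
    rw [uIcc_of_le zero_le_one] at ht
    have hfa : DifferentiableAt ℂ f (γ t) :=
      hd.differentiableAt (isOpen_ball.mem_nhds (hmem t ht))
    exact hfa.hasDerivAt.comp t (hγ' t)
  have hint : IntervalIntegrable (fun t : ℝ => deriv f (γ t) * (z - ζ)) MeasureTheory.volume 0 1 := by
    apply ContinuousOn.intervalIntegrable
    rw [uIcc_of_le zero_le_one]
    exact hcont.mul continuousOn_const
  have hFTC : ∫ t in (0:ℝ)..1, deriv f (γ t) * (z - ζ) = f z - f ζ := by
    rw [integral_eq_sub_of_hasDerivAt hfd hint]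
    simp [hγ_def]
  have hI : (∫ t in (0:ℝ)..1, deriv f (γ t)) = (f z - f ζ) / (z - ζ) := by
    rw [eq_div_iff (sub_ne_zero.mpr hne), ← hFTC, intervalIntegral.integral_mul_const]
  have hq : (∫ t in (0:ℝ)..1, deriv f (γ t) / c) = (f z - f ζ) / ((z - ζ) * c) := by
    rw [intervalIntegral.integral_div, hI, div_div]
  rw [← hq]
  have hint2 : IntervalIntegrable (fun t : ℝ => deriv f (γ t) / c) MeasureTheory.volume 0 1 := by
    apply ContinuousOn.intervalIntegrable
    rw [uIcc_of_le zero_le_one]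
    exact hcont.div_const c
  have hre : (∫ t in (0:ℝ)..1, deriv f (γ t) / c).re
      = ∫ t in (0:ℝ)..1, (deriv f (γ t) / c).re :=
    (Complex.reCLM.intervalIntegral_comp_comm hint2).symm
  rw [hre]
  apply intervalIntegral_pos_of_pos_on
  · apply ContinuousOn.intervalIntegrable
    rw [uIcc_of_le zero_le_one]
    exact Complex.continuous_re.comp_continuousOn (hcont.div_const c)
  · intro t ht
    exact h z hz (γ t) (hmem t (Ioo_subset_Icc_self ht))
  · exact zero_lt_one

/-- Re(f'(w)/f'(z)) > 0 on 𝔻 × 𝔻 implies f is univalent and uniformly starlike. -/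
theorem ust_of_deriv_quotient_positive (f : ℂ → ℂ) (hf : IsNormalized f)
    (h : ∀ z ∈ unitDisk, ∀ w ∈ unitDisk, 0 < (deriv f w / deriv f z).re) :
    Set.InjOn f unitDisk ∧ IsUST f := by
  have hinj : Set.InjOn f unitDisk := by
    intro a ha b hb hab
    by_contra hne
    have hk := key_lemma f hf.1 h ha hb hne
    rw [hab] at hk
    simp at hk
  refine ⟨hinj, hf, hinj, ?_⟩
  intro z hz ζ hζ hne
  have hk := key_lemma f hf.1 h hz hζ hne
  set q := (f z - f ζ) / ((z - ζ) * deriv f z) with hq_def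
  have hqne : q ≠ 0 := by
    intro h0; rw [h0] at hk; simp at hk
  have hfne : f z - f ζ ≠ 0 := by
    intro h0; rw [hq_def, h0] at hqne; simp at hqne
  have heq : (z - ζ) * deriv f z / (f z - f ζ) = q⁻¹ := by
    rw [hq_def, inv_div]
  rw [heq, Complex.inv_re]
  exact div_nonneg hk.le (Complex.normSq_nonneg q)
end
end

section
/- Let f ∈ UST. Then for all z, w ∈ 𝔻, Re((f'(w)/f'(z))^{1/2}) > 0, where ^{1/2} denotes the principal complex power. -/
open Complex Metric Set

noncomputable section

lemma aux_sqrt_re_pos {u v : ℂ} (hu : 0 < u.re) (hv : 0 < v.re) :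
    0 < ((v / u) ^ ((1 : ℂ) / 2)).re := by
  have hu0 : u ≠ 0 := fun h => by simp [h] at hu
  have hv0 : v ≠ 0 := fun h => by simp [h] at hv
  set x := v / u with hx
  have hx0 : x ≠ 0 := div_ne_zero hv0 hu0
  have harg : Complex.arg x ≠ Real.pi := by
    intro h
    rw [Complex.arg_eq_pi_iff] at h
    have hxu : v = x * u := by rw [hx, div_mul_cancel₀ _ hu0]
    have hre : v.re = x.re * u.re - x.im * u.im := by rw [hxu, Complex.mul_re]
    rw [h.2] at hre
    nlinarith [h.1]
  rw [Complex.cpow_def_of_ne_zero hx0, Complex.exp_re]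
  apply mul_pos (Real.exp_pos _)
  apply Real.cos_pos_of_mem_Ioo
  have him : (Complex.log x * ((1:ℂ)/2)).im = Complex.arg x / 2 := by
    simp [Complex.mul_im, Complex.log_im]
    ring
  rw [him]
  constructor
  · have := Complex.neg_pi_lt_arg x
    linarith
  · have := lt_of_le_of_ne (Complex.arg_le_pi x) harg
    linarith

lemma strict_pos_of_analytic {g : ℂ → ℂ} (hg : AnalyticOnNhd ℂ g unitDisk)
    (hre : ∀ ζ ∈ unitDisk, 0 ≤ (g ζ).re) {a : ℂ} (ha : a ∈ unitDisk)
    (hpa : 0 < (g a).re) : ∀ ζ ∈ unitDisk, 0 < (g ζ).re := by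
  have hconn : IsPreconnected unitDisk := (convex_ball (0:ℂ) 1).isPreconnected
  rcases hg.is_constant_or_isOpen hconn with ⟨c, hc⟩ | hopen
  · intro ζ hζ; rw [hc ζ hζ, ← hc a ha]; exact hpa
  · intro ζ hζ
    rcases lt_or_eq_of_le (hre ζ hζ) with h | h
    · exact h
    exfalso
    have hopen' : IsOpen (g '' unitDisk) := hopen unitDisk subset_rfl isOpen_ball
    obtain ⟨ε, hε, hball⟩ := Metric.isOpen_iff.mp hopen' (g ζ) ⟨ζ, hζ, rfl⟩
    have hmem : g ζ - (ε/2 : ℝ) ∈ Metric.ball (g ζ) ε := by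
      simp only [Metric.mem_ball, Complex.dist_eq]
      have : g ζ - (ε/2 : ℝ) - g ζ = -(ε/2 : ℝ) := by ring
      rw [this]
      simp [abs_of_pos hε]
      linarith
    obtain ⟨ξ, hξ, hgξ⟩ := hball hmem
    have h2 := hre ξ hξ
    rw [hgξ] at h2
    simp [Complex.sub_re, Complex.ofReal_re] at h2
    rw [← h] at h2
    linarith

/-- for f ∈ UST, Re((f'(w)/f'(z))^(1/2)) > 0. -/
theorem ust_sqrt_deriv_quotient_positive (f : ℂ → ℂ) (hf : IsUST f)
    (z w : ℂ) (hz : z ∈ unitDisk) (hw : w ∈ unitDisk) :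
    0 < ((deriv f w / deriv f z) ^ ((1 : ℂ) / 2)).re := by
  obtain ⟨⟨hdiff, hf0, hf'0⟩, hinj, hust⟩ := hf
  have hopenD : IsOpen unitDisk := isOpen_ball
  have hmem : ∀ ⦃a : ℂ⦄, a ∈ unitDisk → unitDisk ∈ nhds a := fun a ha => hopenD.mem_nhds ha
  have h0 : (0:ℂ) ∈ unitDisk := by simp [unitDisk]
  have hdsl : ∀ a ∈ unitDisk, AnalyticOnNhd ℂ (dslope f a) unitDisk := fun a ha =>
    ((Complex.differentiableOn_dslope (hmem ha)).mpr hdiff).analyticOnNhd hopenD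
  have hderiv_an : AnalyticOnNhd ℂ (deriv f) unitDisk := (hdiff.analyticOnNhd hopenD).deriv
  -- dslope nonvanishing off the base point
  have hne : ∀ a ∈ unitDisk, ∀ ζ ∈ unitDisk, ζ ≠ a → dslope f a ζ ≠ 0 := by
    intro a ha ζ hζ hza
    rw [dslope_of_ne f hza, slope_def_field]
    exact div_ne_zero (sub_ne_zero.mpr fun h => hza (hinj hζ ha h))
      (sub_ne_zero.mpr hza)
  -- rewritten UST inequality
  have hust' : ∀ a ∈ unitDisk, ∀ ζ ∈ unitDisk, ζ ≠ a →
      0 ≤ (deriv f a / dslope f a ζ).re := by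
    intro a ha ζ hζ hza
    have h := hust a ha ζ hζ (Ne.symm hza)
    have hfa : f ζ - f a ≠ 0 := sub_ne_zero.mpr fun h => hza (hinj hζ ha h)
    have hza' : (ζ : ℂ) - a ≠ 0 := sub_ne_zero.mpr hza
    have hfa' : f a - f ζ ≠ 0 := fun hc => hfa (by linear_combination -hc)
    have heq : (a - ζ) * deriv f a / (f a - f ζ) = deriv f a / dslope f a ζ := by
      rw [dslope_of_ne f hza, slope_def_field, div_div_eq_mul_div,
        div_eq_div_iff hfa' hfa]
      ring
    rwa [heq] at h
  -- Step 1: deriv f never vanishes on the disk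
  have hd0ne : ∀ ζ ∈ unitDisk, dslope f 0 ζ ≠ 0 := by
    intro ζ hζ
    by_cases h : ζ = 0
    · subst h; rw [dslope_same, hf'0]; exact one_ne_zero
    · exact hne 0 h0 ζ hζ h
  have hsym : ∀ a b : ℂ, a ≠ b → dslope f a b = dslope f b a := by
    intro a b hab
    rw [dslope_of_ne f (Ne.symm hab), dslope_of_ne f hab, slope_comm]
  have hp_an : AnalyticOnNhd ℂ (fun ζ => deriv f ζ / dslope f 0 ζ) unitDisk :=
    hderiv_an.div (hdsl 0 h0) hd0ne
  have hp_nonneg : ∀ ζ ∈ unitDisk, 0 ≤ ((fun ζ => deriv f ζ / dslope f 0 ζ) ζ).re := by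
    intro ζ hζ
    by_cases h : ζ = 0
    · subst h; simp [dslope_same, hf'0]
    · have := hust' ζ hζ 0 h0 (Ne.symm h)
      rwa [hsym ζ 0 h] at this
  have hp_pos := strict_pos_of_analytic hp_an hp_nonneg h0 (by simp [dslope_same, hf'0])
  have hf'ne : ∀ ζ ∈ unitDisk, deriv f ζ ≠ 0 := by
    intro ζ hζ hc
    have := hp_pos ζ hζ
    simp [hc] at this
  -- Step 2: strict positivity of the two-variable quantity
  have key : ∀ a ∈ unitDisk, ∀ ζ ∈ unitDisk, 0 < (deriv f a / dslope f a ζ).re := by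
    intro a ha
    have hdne : ∀ ζ ∈ unitDisk, dslope f a ζ ≠ 0 := by
      intro ζ hζ
      by_cases h : ζ = a
      · subst h; rw [dslope_same]; exact hf'ne ζ hζ
      · exact hne a ha ζ hζ h
    have hqa : deriv f a / dslope f a a = 1 := by
      rw [dslope_same]; exact div_self (hf'ne a ha)
    refine strict_pos_of_analytic (analyticOnNhd_const.div (hdsl a ha) hdne) ?_ ha
      (by simp only [hqa]; norm_num)
    intro ζ hζ
    by_cases h : ζ = a
    · subst h; simp only [hqa]; norm_num
    · exact hust' a ha ζ hζ h
  -- Step 3: conclude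
  by_cases hzw : w = z
  · subst hzw
    rw [div_self (hf'ne w hw), one_cpow]
    norm_num
  · have hu := key z hz w hw
    have hv := key w hw z hz
    rw [hsym w z hzw] at hv
    have hsne : dslope f z w ≠ 0 := hne z hz w hw hzw
    have heq : deriv f w / deriv f z
        = (deriv f w / dslope f z w) / (deriv f z / dslope f z w) := by
      field_simp
    rw [heq]
    exact aux_sqrt_re_pos hu hv
end
end

section
/- Let (aₙ)_{n≥2} be nonnegative real numbers such that the power series f(z) = z − Σ_{n≥2} aₙ zⁿ converges on 𝔻 and defines an analytic function there. Then f ∈ SP if and only if Σ_{n≥2} (2n−1)aₙ ≤ 1. -/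
open Complex Metric Set

noncomputable section

/-- coefficient sequence -/
private def spc (a : ℕ → ℝ) : ℕ → ℂ
  | 0 => 0
  | 1 => 1
  | n + 2 => -(a (n + 2) : ℂ)

private lemma sp_hasSum (a : ℕ → ℝ) (f : ℂ → ℂ)
    (hconv : ∀ z ∈ unitDisk, Summable (fun n : ℕ => (a (n + 2) : ℂ) * z ^ (n + 2)))
    (hf : ∀ z ∈ unitDisk, f z = z - ∑' n : ℕ, (a (n + 2) : ℂ) * z ^ (n + 2)) :
    ∀ z ∈ unitDisk, HasSum (fun n : ℕ => spc a n * z ^ n) (f z) := by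
  intro z hz
  rw [hf z hz]
  rw [← hasSum_nat_add_iff' 2]
  have h := (hconv z hz).hasSum.neg
  have e1 : (fun n : ℕ => spc a (n + 2) * z ^ (n + 2))
      = fun n : ℕ => -((a (n + 2) : ℂ) * z ^ (n + 2)) := by
    funext n; simp [spc]
  rw [e1]
  convert h using 1
  simp [Finset.sum_range_succ, spc]

private lemma sp_ball (a : ℕ → ℝ) (f : ℂ → ℂ)
    (hconv : ∀ z ∈ unitDisk, Summable (fun n : ℕ => (a (n + 2) : ℂ) * z ^ (n + 2)))
    (hf : ∀ z ∈ unitDisk, f z = z - ∑' n : ℕ, (a (n + 2) : ℂ) * z ^ (n + 2)) :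
    HasFPowerSeriesOnBall f (FormalMultilinearSeries.ofScalars ℂ (spc a)) 0 1 := by
  constructor
  · -- radius
    refine le_trans ?_ le_rfl
    apply ENNReal.le_of_forall_nnreal_lt
    intro r hr
    have hz : ((r : ℝ) : ℂ) ∈ unitDisk := by
      simp [unitDisk, mem_ball_zero_iff, _root_.abs_of_nonneg r.2]
      exact_mod_cast hr
    have hs := (sp_hasSum a f hconv hf _ hz).summable
    have ht : Filter.Tendsto (fun n : ℕ => ‖FormalMultilinearSeries.ofScalars ℂ (spc a) n‖ * (r:ℝ) ^ n)
        Filter.atTop (nhds 0) := by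
      have := hs.tendsto_atTop_zero
      have h2 : Filter.Tendsto (fun n : ℕ => ‖spc a n * ((r:ℝ):ℂ) ^ n‖) Filter.atTop (nhds 0) := by
        simpa using this.norm
      convert h2 using 2 with n
      rw [FormalMultilinearSeries.ofScalars_norm, norm_mul, norm_pow]
      norm_num [_root_.abs_of_nonneg r.2]
    obtain ⟨C, hC⟩ := ht.bddAbove_range.imp (fun C hC => fun n => hC (Set.mem_range_self n))
    exact FormalMultilinearSeries.le_radius_of_bound _ C hC
  · exact one_pos
  · intro y hy
    have hy' : y ∈ unitDisk := by
      have h := hy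
      rw [Metric.mem_eball, edist_zero_right, enorm_eq_nnnorm, ← ENNReal.coe_one,
        ENNReal.coe_lt_coe, ← NNReal.coe_lt_coe] at h
      simpa [unitDisk, mem_ball_zero_iff] using h
    have e : (fun n : ℕ => (FormalMultilinearSeries.ofScalars ℂ (spc a)) n (fun _ => y))
        = fun n : ℕ => spc a n * y ^ n := by
      funext n
      rw [FormalMultilinearSeries.ofScalars_apply_eq, smul_eq_mul]
    rw [e, zero_add]
    exact sp_hasSum a f hconv hf y hy' 

private lemma sp_deriv (a : ℕ → ℝ) (f : ℂ → ℂ)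
    (hconv : ∀ z ∈ unitDisk, Summable (fun n : ℕ => (a (n + 2) : ℂ) * z ^ (n + 2)))
    (hf : ∀ z ∈ unitDisk, f z = z - ∑' n : ℕ, (a (n + 2) : ℂ) * z ^ (n + 2)) :
    ∀ z ∈ unitDisk,
      HasSum (fun n : ℕ => -(((n : ℂ) + 2) * (a (n + 2) : ℂ) * z ^ (n + 2)))
        (z * deriv f z - z) := by
  intro z hz
  have hA := sp_ball a f hconv hf
  have hd := hA.fderiv
  have hzb : z ∈ Metric.eball (0 : ℂ) 1 := by
    rw [Metric.mem_eball, edist_zero_right, enorm_eq_nnnorm, ← ENNReal.coe_one, ENNReal.coe_lt_coe,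
      ← NNReal.coe_lt_coe]
    simpa [unitDisk, mem_ball_zero_iff] using hz
  have hs := hd.hasSum hzb
  have hs2 := hs.mapL (ContinuousLinearMap.apply ℂ ℂ z)
  have hF : HasSum (fun n : ℕ => ((n : ℂ) + 1) * spc a (n + 1) * z ^ (n + 1))
      (z * deriv f z) := by
    have e : (fun n : ℕ => (ContinuousLinearMap.apply ℂ ℂ z)
        ((FormalMultilinearSeries.ofScalars ℂ (spc a)).derivSeries n fun _ => z))
        = fun n : ℕ => ((n : ℂ) + 1) * spc a (n + 1) * z ^ (n + 1) := by
      funext n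
      rw [ContinuousLinearMap.apply_apply, FormalMultilinearSeries.derivSeries_apply_diag,
        FormalMultilinearSeries.ofScalars_apply_eq]
      push_cast [nsmul_eq_mul, smul_eq_mul]
      ring
    have e2 : (ContinuousLinearMap.apply ℂ ℂ z) (fderiv ℂ f (0 + z)) = z * deriv f z := by
      rw [zero_add, ContinuousLinearMap.apply_apply]
      have h4 : fderiv ℂ f z z = z • fderiv ℂ f z 1 := by
        rw [← (fderiv ℂ f z).map_smul, smul_eq_mul, mul_one]
      rw [h4, smul_eq_mul, fderiv_apply_one_eq_deriv]
    rwa [e, e2] at hs2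
  have := (hasSum_nat_add_iff'
    (f := fun n : ℕ => ((n : ℂ) + 1) * spc a (n + 1) * z ^ (n + 1)) 1).2 hF
  have e3 : (fun n : ℕ => ((n + 1 : ℕ) + 1 : ℂ) * spc a ((n + 1) + 1) * z ^ ((n + 1) + 1))
      = fun n : ℕ => -(((n : ℂ) + 2) * (a (n + 2) : ℂ) * z ^ (n + 2)) := by
    funext n
    have h1 : ((n + 1) + 1) = n + 2 := by ring
    have hsp : spc a (n + 2) = -(a (n + 2) : ℂ) := rfl
    rw [h1, hsp]
    push_cast
    ring
  rw [e3] at this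
  convert this using 1
  · rfl
  have hsp1 : spc a 1 = 1 := rfl
  simp [hsp1]

private lemma hasSum_real_of_complex {x : ℕ → ℝ} {T : ℂ}
    (h : HasSum (fun n => ((x n : ℝ) : ℂ)) T) : HasSum x T.re ∧ T = ((T.re : ℝ) : ℂ) := by
  have hre := h.mapL Complex.reCLM
  simp only [Complex.reCLM_apply, Complex.ofReal_re] at hre
  exact ⟨hre, h.unique (Complex.hasSum_ofReal.2 hre)⟩

private lemma sp_f_zero (a : ℕ → ℝ) (f : ℂ → ℂ)
    (hf : ∀ z ∈ unitDisk, f z = z - ∑' n : ℕ, (a (n + 2) : ℂ) * z ^ (n + 2)) :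
    f 0 = 0 := by
  have h0 : (0 : ℂ) ∈ unitDisk := by simp [unitDisk]
  rw [hf 0 h0]
  simp

private lemma sp_deriv_zero (a : ℕ → ℝ) (f : ℂ → ℂ)
    (hconv : ∀ z ∈ unitDisk, Summable (fun n : ℕ => (a (n + 2) : ℂ) * z ^ (n + 2)))
    (hf : ∀ z ∈ unitDisk, f z = z - ∑' n : ℕ, (a (n + 2) : ℂ) * z ^ (n + 2)) :
    deriv f 0 = 1 := by
  have hA := sp_ball a f hconv hf
  rw [hA.hasFPowerSeriesAt.deriv]
  show (FormalMultilinearSeries.ofScalars ℂ (spc a)) 1 (fun _ => 1) = 1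
  rw [FormalMultilinearSeries.ofScalars_apply_eq]
  have h1 : spc a 1 = 1 := rfl
  simp [h1]

private lemma sp_mem_disk {r : ℝ} (hr0 : 0 ≤ r) (hr1 : r < 1) : ((r : ℝ) : ℂ) ∈ unitDisk := by
  simp only [unitDisk, mem_ball_zero_iff, Complex.norm_real, Real.norm_eq_abs,
    _root_.abs_of_nonneg hr0]
  exact hr1

private lemma sp_real_v (a : ℕ → ℝ) (f : ℂ → ℂ)
    (hconv : ∀ z ∈ unitDisk, Summable (fun n : ℕ => (a (n + 2) : ℂ) * z ^ (n + 2)))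
    (hf : ∀ z ∈ unitDisk, f z = z - ∑' n : ℕ, (a (n + 2) : ℂ) * z ^ (n + 2))
    {r : ℝ} (hr0 : 0 ≤ r) (hr1 : r < 1) :
    ∃ Sv : ℝ, HasSum (fun n : ℕ => a (n + 2) * r ^ (n + 2)) Sv ∧
      f ((r : ℝ) : ℂ) = (((r - Sv : ℝ)) : ℂ) := by
  have hz := sp_mem_disk hr0 hr1
  have hc := (hconv _ hz).hasSum
  have e : (fun n : ℕ => (a (n + 2) : ℂ) * ((r : ℝ) : ℂ) ^ (n + 2))
      = fun n : ℕ => ((a (n + 2) * r ^ (n + 2) : ℝ) : ℂ) := by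
    funext n; push_cast; ring
  rw [e] at hc
  obtain ⟨h1, h2⟩ := hasSum_real_of_complex hc
  refine ⟨_, h1, ?_⟩
  rw [hf _ hz, e, hc.tsum_eq, h2]
  push_cast
  simp

private lemma sp_real_u (a : ℕ → ℝ) (f : ℂ → ℂ)
    (hconv : ∀ z ∈ unitDisk, Summable (fun n : ℕ => (a (n + 2) : ℂ) * z ^ (n + 2)))
    (hf : ∀ z ∈ unitDisk, f z = z - ∑' n : ℕ, (a (n + 2) : ℂ) * z ^ (n + 2))
    {r : ℝ} (hr0 : 0 ≤ r) (hr1 : r < 1) :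
    ∃ Su : ℝ, HasSum (fun n : ℕ => ((n : ℝ) + 2) * a (n + 2) * r ^ (n + 2)) Su ∧
      ((r : ℝ) : ℂ) * deriv f ((r : ℝ) : ℂ) = (((r - Su : ℝ)) : ℂ) := by
  have hz := sp_mem_disk hr0 hr1
  have hd := sp_deriv a f hconv hf _ hz
  have e : (fun n : ℕ => -(((n : ℂ) + 2) * (a (n + 2) : ℂ) * ((r : ℝ) : ℂ) ^ (n + 2)))
      = fun n : ℕ => ((-(((n : ℝ) + 2) * a (n + 2) * r ^ (n + 2)) : ℝ) : ℂ) := by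
    funext n; push_cast; ring
  rw [e] at hd
  obtain ⟨h1, h2⟩ := hasSum_real_of_complex hd
  set W := ((r : ℝ) : ℂ) * deriv f ((r : ℝ) : ℂ) - ((r : ℝ) : ℂ) with hW
  refine ⟨-W.re, ?_, ?_⟩
  · have := h1.neg
    simpa using this
  · have : ((r : ℝ) : ℂ) * deriv f ((r : ℝ) : ℂ) = W + ((r : ℝ) : ℂ) := by rw [hW]; ring
    rw [this, h2]
    push_cast
    simp only [Complex.ofReal_re]
    ring

set_option maxHeartbeats 1600000 in
/-- a function with negative coefficients is parabolic starlike iff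
Σ_{n≥2} (2n−1)aₙ ≤ 1. -/
theorem sp_negative_coefficients_iff (a : ℕ → ℝ) (ha : ∀ n, 2 ≤ n → 0 ≤ a n)
    (f : ℂ → ℂ)
    (hconv : ∀ z ∈ unitDisk, Summable (fun n : ℕ => (a (n + 2) : ℂ) * z ^ (n + 2)))
    (hf : ∀ z ∈ unitDisk, f z = z - ∑' n : ℕ, (a (n + 2) : ℂ) * z ^ (n + 2))
    (hfd : DifferentiableOn ℂ f unitDisk) :
    IsSP f ↔
      (Summable (fun n : ℕ => (2 * ((n : ℝ) + 2) - 1) * a (n + 2)) ∧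
        ∑' n : ℕ, (2 * ((n : ℝ) + 2) - 1) * a (n + 2) ≤ 1) := by
  have hnorm : IsNormalized f :=
    ⟨hfd, sp_f_zero a f hf, sp_deriv_zero a f hconv hf⟩
  have hfact : ∀ r : ℝ, r ∈ Ioo (0:ℝ) 1 → IsSP f → ∃ Su Sv : ℝ,
      HasSum (fun n : ℕ => ((n : ℝ) + 2) * a (n + 2) * r ^ (n + 2)) Su ∧
      HasSum (fun n : ℕ => a (n + 2) * r ^ (n + 2)) Sv ∧
      (f ((r:ℝ):ℂ)).re = r - Sv ∧
      |((r - Su) / (r - Sv)) - 1| < (r - Su) / (r - Sv) := by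
    intro r hr hSP
    obtain ⟨Su, hSu, hfu⟩ := sp_real_u a f hconv hf hr.1.le hr.2
    obtain ⟨Sv, hSv, hfv⟩ := sp_real_v a f hconv hf hr.1.le hr.2
    refine ⟨Su, Sv, hSu, hSv, by rw [hfv]; simp, ?_⟩
    have hz := sp_mem_disk hr.1.le hr.2
    have hz0 : ((r:ℝ):ℂ) ≠ 0 := by
      simpa using ne_of_gt hr.1
    have hcond := hSP.2 _ hz hz0
    rw [hfu, hfv, ← Complex.ofReal_div,
      show ((((r - Su)/(r - Sv) : ℝ)) : ℂ) - 1 = ((((r - Su)/(r - Sv) - 1 : ℝ)) : ℂ) by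
        push_cast; ring,
      Complex.norm_real, Real.norm_eq_abs, Complex.ofReal_re] at hcond
    exact hcond
  constructor
  · intro hSP
    have hvne : ∀ r ∈ Ioo (0:ℝ) 1, (f ((r:ℝ):ℂ)).re ≠ 0 := by
      intro r hr
      obtain ⟨Su, Sv, hSu, hSv, hvr, habs⟩ := hfact r hr hSP
      have ht : 1/2 < (r - Su)/(r - Sv) := by
        have h1 := neg_le_abs ((r - Su)/(r - Sv) - 1)
        linarith
      rw [hvr]
      intro h0
      rw [h0, div_zero] at ht
      linarith
    have hvcont : ContinuousOn (fun r : ℝ => (f ((r:ℝ):ℂ)).re) (Ioo 0 1) := by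
      apply Complex.continuous_re.comp_continuousOn
      apply (hfd.continuousOn).comp Complex.continuous_ofReal.continuousOn
      intro r hr
      exact sp_mem_disk hr.1.le hr.2
    obtain ⟨M, hM, -⟩ := sp_real_v a f hconv hf
      (by norm_num : (0:ℝ) ≤ 1/2) (by norm_num)
    have hM0 : 0 ≤ M := hasSum_le
      (fun n => mul_nonneg (ha _ (by omega)) (by positivity)) hasSum_zero hM
    set r₀ : ℝ := min (1/4) (1/(8*M+1)) with hr₀def
    have hr₀pos : 0 < r₀ := lt_min (by norm_num) (by positivity)
    have hr₀mem : r₀ ∈ Ioo (0:ℝ) 1 :=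
      ⟨hr₀pos, lt_of_le_of_lt (min_le_left _ _) (by norm_num)⟩
    obtain ⟨Sv₀, hSv₀, hfv₀⟩ := sp_real_v a f hconv hf hr₀pos.le hr₀mem.2
    have hr₀le : r₀ ≤ 1/2 := le_trans (min_le_left _ _) (by norm_num)
    have hSv₀le : Sv₀ ≤ M * (4*r₀^2) := by
      refine hasSum_le (fun n => ?_) hSv₀ (hM.mul_right (4*r₀^2))
      have h1 : r₀^n ≤ (1/2:ℝ)^n := pow_le_pow_left₀ hr₀pos.le hr₀le n
      have h2 : r₀^(n+2) = r₀^n * r₀^2 := by ring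
      have h3 : (1/2:ℝ)^(n+2) * (4*r₀^2) = (1/2)^n * r₀^2 := by ring
      have h4 : r₀^(n+2) ≤ (1/2:ℝ)^(n+2) * (4*r₀^2) := by
        rw [h2, h3]
        exact mul_le_mul_of_nonneg_right h1 (sq_nonneg _)
      calc a (n+2) * r₀^(n+2) ≤ a (n+2) * ((1/2:ℝ)^(n+2) * (4*r₀^2)) :=
            mul_le_mul_of_nonneg_left h4 (ha _ (by omega))
        _ = a (n+2) * (1/2:ℝ)^(n+2) * (4*r₀^2) := by ring
    have hbound : r₀ * (8*M+1) ≤ 1 := by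
      rw [← le_div_iff₀ (by positivity : (0:ℝ) < 8*M+1)]
      exact min_le_right _ _
    have hv₀pos : 0 < (f ((r₀:ℝ):ℂ)).re := by
      rw [hfv₀, Complex.ofReal_re]
      nlinarith [mul_nonneg hM0 hr₀pos.le, sq_nonneg r₀, mul_pos hr₀pos hr₀pos]
    have hvpos : ∀ r ∈ Ioo (0:ℝ) 1, 0 < (f ((r:ℝ):ℂ)).re := by
      intro r hr
      rcases (hvne r hr).lt_or_gt with hneg | hpos
      · exfalso
        rcases lt_trichotomy r r₀ with h | h | h
        · have hsub : Icc r r₀ ⊆ Ioo (0:ℝ) 1 := fun x hx =>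
            ⟨lt_of_lt_of_le hr.1 hx.1, lt_of_le_of_lt hx.2 hr₀mem.2⟩
          obtain ⟨c, hc, hc0⟩ := intermediate_value_Icc h.le (hvcont.mono hsub)
            ⟨hneg.le, hv₀pos.le⟩
          exact hvne c (hsub hc) hc0
        · rw [h] at hneg; linarith
        · have hsub : Icc r₀ r ⊆ Ioo (0:ℝ) 1 := fun x hx =>
            ⟨lt_of_lt_of_le hr₀pos hx.1, lt_of_le_of_lt hx.2 hr.2⟩
          obtain ⟨c, hc, hc0⟩ := intermediate_value_Icc' h.le (hvcont.mono hsub)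
            ⟨hneg.le, hv₀pos.le⟩
          exact hvne c (hsub hc) hc0
      · exact hpos
    have hkey : ∀ N : ℕ, ∀ r ∈ Ioo (0:ℝ) 1,
        ∑ n ∈ Finset.range N, (2 * ((n:ℝ) + 2) - 1) * a (n + 2) * r ^ (n + 2) ≤ 1 := by
      intro N r hr
      obtain ⟨Su, Sv, hSu, hSv, hvr, habs⟩ := hfact r hr hSP
      have ht : 1/2 < (r - Su)/(r - Sv) := by
        have h1 := neg_le_abs ((r - Su)/(r - Sv) - 1)
        linarith
      have hvp := hvpos r hr
      rw [hvr] at hvp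
      have h2 : 1/2 * (r - Sv) < r - Su := (lt_div_iff₀ hvp).1 ht
      have hW : HasSum (fun n : ℕ => (2 * ((n:ℝ) + 2) - 1) * a (n + 2) * r ^ (n + 2))
          (2*Su - Sv) := by
        have h5 := (hSu.mul_left 2).sub hSv
        convert h5 using 1
        · rfl
        funext n; ring
      have hpart : ∑ n ∈ Finset.range N, (2 * ((n:ℝ) + 2) - 1) * a (n + 2) * r ^ (n + 2)
          ≤ 2*Su - Sv := by
        refine sum_le_hasSum _ (fun n _ => ?_) hW
        have h6 := ha (n+2) (by omega)
        have h2n : (0:ℝ) ≤ 2 * ((n:ℝ)+2) - 1 := by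
          have := Nat.cast_nonneg (α := ℝ) n
          linarith
        have hrp : (0:ℝ) ≤ r ^ (n+2) := pow_nonneg hr.1.le _
        exact mul_nonneg (mul_nonneg h2n h6) hrp
      have : 2*Su - Sv < r := by linarith
      linarith [hr.2]
    have hbd : ∀ N : ℕ, ∑ n ∈ Finset.range N, (2 * ((n:ℝ) + 2) - 1) * a (n + 2) ≤ 1 := by
      intro N
      have hcont : Continuous (fun r : ℝ =>
          ∑ n ∈ Finset.range N, (2 * ((n:ℝ) + 2) - 1) * a (n + 2) * r ^ (n + 2)) := by
        continuity
      have hlim : Filter.Tendsto (fun r : ℝ =>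
          ∑ n ∈ Finset.range N, (2 * ((n:ℝ) + 2) - 1) * a (n + 2) * r ^ (n + 2))
          (nhdsWithin 1 (Iio 1))
          (nhds (∑ n ∈ Finset.range N, (2 * ((n:ℝ) + 2) - 1) * a (n + 2))) := by
        have h7 := hcont.tendsto 1
        simp only [one_pow, mul_one] at h7
        exact h7.mono_left nhdsWithin_le_nhds
      refine le_of_tendsto hlim ?_
      filter_upwards [Ioo_mem_nhdsLT_of_mem (by norm_num : (1:ℝ) ∈ Ioc 0 1)] with r hr
      exact hkey N r hr
    have hposc : ∀ n : ℕ, 0 ≤ (2 * ((n:ℝ) + 2) - 1) * a (n + 2) := by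
      intro n
      refine mul_nonneg ?_ (ha _ (by omega))
      have := Nat.cast_nonneg (α := ℝ) n
      linarith
    exact ⟨summable_of_sum_range_le hposc hbd,
      (summable_of_sum_range_le hposc hbd).tsum_le_of_sum_range_le hbd⟩
  · rintro ⟨hsum, hle⟩
    refine ⟨hnorm, ?_⟩
    intro z hz hz0
    set r : ℝ := ‖z‖ with hrdef
    have hr0 : 0 < r := norm_pos_iff.2 hz0
    have hr1 : r < 1 := by
      simpa [unitDisk, mem_ball_zero_iff] using hz
    obtain ⟨Sv, hSv, -⟩ := sp_real_v a f hconv hf hr0.le hr1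
    obtain ⟨Su, hSu, -⟩ := sp_real_u a f hconv hf hr0.le hr1
    have hB : HasSum (fun n : ℕ => ((n:ℝ) + 1) * a (n + 2) * r ^ (n + 2)) (Su - Sv) := by
      have h5 := hSu.sub hSv
      convert h5 using 1
      · rfl
      funext n; ring
    have hSv0 : 0 ≤ Sv := hasSum_le
      (fun n => mul_nonneg (ha _ (by omega)) (by positivity)) hasSum_zero hSv
    have hB0 : 0 ≤ Su - Sv := by
      refine hasSum_le (fun n => ?_) hasSum_zero hB
      have := ha (n+2) (by omega)
      have hn := Nat.cast_nonneg (α := ℝ) n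
      have : (0:ℝ) ≤ r ^ (n+2) := by positivity
      positivity
    -- norm of the tail sum
    have e_norm : (fun n : ℕ => ‖(a (n+2) : ℂ) * z ^ (n+2)‖)
        = fun n : ℕ => a (n+2) * r ^ (n+2) := by
      funext n
      rw [norm_mul, norm_pow, Complex.norm_real, Real.norm_eq_abs,
        _root_.abs_of_nonneg (ha _ (by omega))]
    have hfz := hf z hz
    have hDnorm : ‖∑' n : ℕ, (a (n+2) : ℂ) * z ^ (n+2)‖ ≤ Sv := by
      have h8 : Summable (fun n : ℕ => ‖(a (n+2) : ℂ) * z ^ (n+2)‖) := by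
        rw [e_norm]; exact hSv.summable
      refine (norm_tsum_le_tsum_norm h8).trans_eq ?_
      rw [tsum_congr (fun n => congrFun e_norm n), hSv.tsum_eq]
    have hnum : HasSum (fun n : ℕ => -(((n:ℂ) + 1) * (a (n+2) : ℂ) * z ^ (n+2)))
        (z * deriv f z - f z) := by
      have h9 := (sp_deriv a f hconv hf z hz).add ((hconv z hz).hasSum)
      have e9 : (fun n : ℕ => -(((n:ℂ) + 2) * (a (n+2) : ℂ) * z ^ (n+2))
          + (a (n+2) : ℂ) * z ^ (n+2))
          = fun n : ℕ => -(((n:ℂ) + 1) * (a (n+2) : ℂ) * z ^ (n+2)) := by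
        funext n; ring
      rw [e9] at h9
      have e10 : z * deriv f z - z + ∑' n : ℕ, (a (n+2) : ℂ) * z ^ (n+2)
          = z * deriv f z - f z := by rw [hfz]; ring
      rwa [e10] at h9
    have hnum_norm : ‖z * deriv f z - f z‖ ≤ Su - Sv := by
      rw [← hnum.tsum_eq]
      have e11 : (fun n : ℕ => ‖-(((n:ℂ) + 1) * (a (n+2) : ℂ) * z ^ (n+2))‖)
          = fun n : ℕ => ((n:ℝ) + 1) * a (n+2) * r ^ (n+2) := by
        funext n
        have hcast : ((n:ℂ) + 1) * (a (n+2) : ℂ) = ((((n:ℝ) + 1) * a (n+2) : ℝ) : ℂ) := by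
          push_cast; ring
        rw [norm_neg, hcast, norm_mul, norm_pow, Complex.norm_real, Real.norm_eq_abs]
        have hnn : (0:ℝ) ≤ ((n:ℝ) + 1) * a (n+2) := by
          have hn := Nat.cast_nonneg (α := ℝ) n
          exact mul_nonneg (by linarith) (ha _ (by omega))
        rw [_root_.abs_of_nonneg hnn]
      have h12 : Summable (fun n : ℕ => ‖-(((n:ℂ) + 1) * (a (n+2) : ℂ) * z ^ (n+2))‖) := by
        rw [e11]; exact hB.summable
      refine (norm_tsum_le_tsum_norm h12).trans_eq ?_
      rw [tsum_congr (fun n => congrFun e11 n), hB.tsum_eq]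
    -- the coefficient inequality gives 2(Su - Sv) + Sv < r
    have hkey2 : 2*(Su - Sv) + Sv < r := by
      have h13 : HasSum (fun n : ℕ => 2 * (((n:ℝ) + 1) * a (n + 2) * r ^ (n + 2))
          + a (n + 2) * r ^ (n + 2)) (2*(Su - Sv) + Sv) := (hB.mul_left 2).add hSv
      have h14 : HasSum (fun n : ℕ => ((2 * ((n:ℝ) + 2) - 1) * a (n + 2)) * r ^ 2)
          ((∑' n : ℕ, (2 * ((n:ℝ) + 2) - 1) * a (n + 2)) * r ^ 2) :=
        hsum.hasSum.mul_right (r^2)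
      have h15 : 2*(Su - Sv) + Sv ≤ (∑' n : ℕ, (2 * ((n:ℝ) + 2) - 1) * a (n + 2)) * r ^ 2 := by
        refine hasSum_le (fun n => ?_) h13 h14
        have h6 := ha (n+2) (by omega)
        have hn := Nat.cast_nonneg (α := ℝ) n
        have hrn : r ^ (n+2) ≤ r ^ 2 := by
          calc r ^ (n+2) = r ^ n * r ^ 2 := by ring
            _ ≤ 1 * r ^ 2 := by
                refine mul_le_mul_of_nonneg_right ?_ (sq_nonneg _)
                exact pow_le_one₀ hr0.le hr1.le
            _ = r ^ 2 := one_mul _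
        have hcoef : (0:ℝ) ≤ 2 * ((n:ℝ) + 2) - 1 := by linarith
        calc 2 * (((n:ℝ) + 1) * a (n + 2) * r ^ (n + 2)) + a (n + 2) * r ^ (n + 2)
            = (2 * ((n:ℝ) + 2) - 1) * a (n + 2) * r ^ (n+2) := by ring
          _ ≤ (2 * ((n:ℝ) + 2) - 1) * a (n + 2) * r ^ 2 :=
              mul_le_mul_of_nonneg_left hrn (mul_nonneg hcoef h6)
      have h16 : (∑' n : ℕ, (2 * ((n:ℝ) + 2) - 1) * a (n + 2)) * r ^ 2 ≤ r ^ 2 := by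
        calc (∑' n : ℕ, (2 * ((n:ℝ) + 2) - 1) * a (n + 2)) * r ^ 2 ≤ 1 * r ^ 2 :=
              mul_le_mul_of_nonneg_right hle (sq_nonneg r)
          _ = r ^ 2 := one_mul _
      have h17 : r ^ 2 < r := by
        have h18 := mul_pos hr0 (show (0:ℝ) < 1 - r by linarith)
        nlinarith [h18]
      linarith
    have hfabs : r - Sv ≤ ‖f z‖ := by
      rw [hfz]
      calc r - Sv ≤ ‖z‖ - ‖∑' n : ℕ, (a (n+2) : ℂ) * z ^ (n+2)‖ := by
            rw [← hrdef]; linarith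
        _ ≤ ‖z - ∑' n : ℕ, (a (n+2) : ℂ) * z ^ (n+2)‖ := norm_sub_norm_le _ _
    have hfpos : 0 < ‖f z‖ := by linarith
    have hfne : f z ≠ 0 := by
      intro h
      rw [h] at hfpos
      simp at hfpos
    have hwm1 : z * deriv f z / f z - 1 = (z * deriv f z - f z) / f z := by
      field_simp
    have hq : ‖z * deriv f z / f z - 1‖ ≤ (Su - Sv) / (r - Sv) := by
      rw [hwm1, norm_div]
      have hd1 : 0 < r - Sv := by linarith
      exact div_le_div₀ hB0 (by exact hnum_norm) hd1 hfabs
    have hhalf : (Su - Sv) / (r - Sv) < 1/2 := by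
      rw [div_lt_iff₀ (by linarith : (0:ℝ) < r - Sv)]
      linarith
    have hre : 1 - ‖z * deriv f z / f z - 1‖ ≤ (z * deriv f z / f z).re := by
      have hb := (abs_le.1 (Complex.abs_re_le_norm (z * deriv f z / f z - 1))).1
      have hre2 : (z * deriv f z / f z - 1).re = (z * deriv f z / f z).re - 1 := by
        simp [Complex.sub_re, Complex.one_re]
      linarith
    linarith
end
end
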